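/- arXiv:1709.03451 — 8 statements merged into one kernel-verified Lean document; each statement's English description precedes it below -/
import Mathlib

section
/- Let P ⊂ ℝ² be a lattice polygon with e_□(P) = l. Suppose Δ_P(x+y) ≥ l and Δ_P(x−y) ≥ l. Then for every primitive vector (a,b) ∈ ℤ² with a ≠ 0 and b ≠ 0, the lattice width w_{(a,b)}(P) = Δ_P(ax+by) is at least l. -/
/-- The lattice polygon determined by a nonempty finite set `V` of lattice points:
the convex hull in `ℝ²` of the corresponding real points. -/
def latticePoly2 (V : Finset (Fin 2 → ℤ)) : Set (Fin 2 → ℝ) :=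
  convexHull ℝ ((fun v : Fin 2 → ℤ => fun i => (v i : ℝ)) '' (V : Set (Fin 2 → ℤ)))

/-- `Δ_P(a₀·x + a₁·y) = w_a(P)`, the lattice width of `P ⊆ ℝ²` in the direction `a ∈ ℤ²`:
the sup minus the inf of the linear form `p ↦ a·p` over `P`. -/
noncomputable def width2 (P : Set (Fin 2 → ℝ)) (a : Fin 2 → ℤ) : ℝ :=
  sSup ((fun p => ∑ i, (a i : ℝ) * p i) '' P) - sInf ((fun p => ∑ i, (a i : ℝ) * p i) '' P)

/-- `T(P) ⊆ [0,l]²` for some affine unimodular transformation `T : p ↦ A·p + v`. -/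
def FitsInSquare (P : Set (Fin 2 → ℝ)) (l : ℤ) : Prop :=
  ∃ (A : Matrix (Fin 2) (Fin 2) ℤ) (v : Fin 2 → ℤ),
    (A.det = 1 ∨ A.det = -1) ∧
    ∀ p ∈ P, ∀ i, ((A.map (fun z : ℤ => (z : ℝ))).mulVec p + fun j => (v j : ℝ)) i ∈
      Set.Icc (0 : ℝ) (l : ℝ)

/-- The set of lattice widths of `P` in all primitive directions `a ∈ ℤ²`. -/
def widthSet2 (P : Set (Fin 2 → ℝ)) : Set ℝ :=
  {w | ∃ a : Fin 2 → ℤ, Int.gcd (a 0) (a 1) = 1 ∧ width2 P a = w}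

/-- `T(P) ⊆ [0,a] × [0,b]` for some affine unimodular transformation `T : p ↦ A·p + v`. -/
def FitsInRect (P : Set (Fin 2 → ℝ)) (a b : ℤ) : Prop :=
  ∃ (A : Matrix (Fin 2) (Fin 2) ℤ) (v : Fin 2 → ℤ),
    (A.det = 1 ∨ A.det = -1) ∧
    ∀ p ∈ P, ((A.map (fun z : ℤ => (z : ℝ))).mulVec p + fun j => (v j : ℝ)) 0 ∈
        Set.Icc (0 : ℝ) (a : ℝ) ∧
      ((A.map (fun z : ℤ => (z : ℝ))).mulVec p + fun j => (v j : ℝ)) 1 ∈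
        Set.Icc (0 : ℝ) (b : ℝ)

private lemma cont_form (a : Fin 2 → ℤ) :
    Continuous (fun p : Fin 2 → ℝ => ∑ i, (a i : ℝ) * p i) := by
  refine continuous_finset_sum _ fun i _ => ?_
  exact continuous_const.mul (continuous_apply i)

/-- Auxiliary: the difference of the form at two points is at most the width. -/
private lemma pair_le_width2 {P : Set (Fin 2 → ℝ)} (hc : IsCompact P) (a : Fin 2 → ℤ)
    {p q : Fin 2 → ℝ} (hp : p ∈ P) (hq : q ∈ P) :
    (∑ i, (a i : ℝ) * p i) - (∑ i, (a i : ℝ) * q i) ≤ width2 P a := by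
  have himg : IsCompact ((fun p => ∑ i, (a i : ℝ) * p i) '' P) :=
    hc.image (cont_form a)
  have h1 : (∑ i, (a i : ℝ) * p i) ≤ sSup ((fun p => ∑ i, (a i : ℝ) * p i) '' P) :=
    le_csSup himg.bddAbove ⟨p, hp, rfl⟩
  have h2 : sInf ((fun p => ∑ i, (a i : ℝ) * p i) '' P) ≤ (∑ i, (a i : ℝ) * q i) :=
    csInf_le himg.bddBelow ⟨q, hq, rfl⟩
  unfold width2
  linarith

/-- Auxiliary: the width is attained at a pair of points of a compact nonempty set. -/
private lemma width2_exists_pair {P : Set (Fin 2 → ℝ)} (hc : IsCompact P)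
    (hne : P.Nonempty) (a : Fin 2 → ℤ) :
    ∃ p ∈ P, ∃ q ∈ P, width2 P a
      = (∑ i, (a i : ℝ) * p i) - (∑ i, (a i : ℝ) * q i) := by
  have himg : IsCompact ((fun p => ∑ i, (a i : ℝ) * p i) '' P) :=
    hc.image (cont_form a)
  have hne' : ((fun p => ∑ i, (a i : ℝ) * p i) '' P).Nonempty := hne.image _
  obtain ⟨p, hp, hpe⟩ := himg.sSup_mem hne'
  obtain ⟨q, hq, hqe⟩ := himg.sInf_mem hne'
  exact ⟨p, hp, q, hq, by rw [width2, ← hpe, ← hqe]⟩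

/-- Theorem (2D reduction): if `e_□(P) = l` and `Δ_P(x+y) ≥ l`, `Δ_P(x−y) ≥ l`, then
`Δ_P(ax+by) ≥ l` for every primitive `(a,b) ∈ ℤ²` with `a ≠ 0` and `b ≠ 0`. -/
theorem width_ge_of_diag_ge (V : Finset (Fin 2 → ℤ)) (hV : V.Nonempty)
    (P : Set (Fin 2 → ℝ)) (hP : P = latticePoly2 V) (l : ℤ)
    (he : max (width2 P ![1, 0]) (width2 P ![0, 1]) = (l : ℝ))
    (h1 : (l : ℝ) ≤ width2 P ![1, 1]) (h2 : (l : ℝ) ≤ width2 P ![1, -1]) :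
    ∀ a b : ℤ, Int.gcd a b = 1 → a ≠ 0 → b ≠ 0 → (l : ℝ) ≤ width2 P ![a, b] := by
  intro a b _ ha hb
  -- compactness and nonemptiness of P
  have hfin : ((fun v : Fin 2 → ℤ => fun i => (v i : ℝ)) '' (V : Set (Fin 2 → ℤ))).Finite :=
    V.finite_toSet.image _
  have hc : IsCompact P := by
    rw [hP]; exact hfin.isCompact_convexHull ℝ
  have hne : P.Nonempty := by
    obtain ⟨v, hv⟩ := hV
    refine ⟨fun i => (v i : ℝ), ?_⟩
    rw [hP]
    exact subset_convexHull ℝ _ ⟨v, hv, rfl⟩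
  -- coordinate widths are at most l
  have hx : width2 P ![1, 0] ≤ (l : ℝ) := he ▸ le_max_left _ _
  have hy : width2 P ![0, 1] ≤ (l : ℝ) := he ▸ le_max_right _ _
  -- coordinate differences of points of P are bounded by l
  have hcoord0 : ∀ p ∈ P, ∀ q ∈ P, p 0 - q 0 ≤ (l : ℝ) := by
    intro p hp q hq
    have := pair_le_width2 hc ![1, 0] hp hq
    simp [Fin.sum_univ_two] at this
    linarith
  have hcoord1 : ∀ p ∈ P, ∀ q ∈ P, p 1 - q 1 ≤ (l : ℝ) := by
    intro p hp q hq
    have := pair_le_width2 hc ![0, 1] hp hq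
    simp [Fin.sum_univ_two] at this
    linarith
  have ha1 : (1 : ℝ) ≤ |(a : ℝ)| := by
    have : (1 : ℤ) ≤ |a| := Int.one_le_abs ha
    calc (1:ℝ) ≤ ((|a| : ℤ) : ℝ) := by exact_mod_cast this
    _ = |(a:ℝ)| := Int.cast_abs
  have hb1 : (1 : ℝ) ≤ |(b : ℝ)| := by
    have : (1 : ℤ) ≤ |b| := Int.one_le_abs hb
    calc (1:ℝ) ≤ ((|b| : ℤ) : ℝ) := by exact_mod_cast this
    _ = |(b:ℝ)| := Int.cast_abs
  rcases lt_or_gt_of_ne (show (a:ℝ) ≠ 0 by exact_mod_cast ha) with hao | hao <;>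
  rcases lt_or_gt_of_ne (show (b:ℝ) ≠ 0 by exact_mod_cast hb) with hbo | hbo
  -- in each case, pick the suitable diagonal pair
  case inl.inl =>
    -- a < 0, b < 0 : use (1,1) pair, with roles of p,q swapped
    obtain ⟨p, hp, q, hq, hpq⟩ := width2_exists_pair hc hne ![1, 1]
    simp [Fin.sum_univ_two] at hpq
    set u1 := p 0 - q 0 with hu1
    set u2 := p 1 - q 1 with hu2
    have hs : (l : ℝ) ≤ u1 + u2 := by rw [hu1, hu2]; linarith [h1, hpq]
    have hb0 : u1 ≤ (l : ℝ) := hcoord0 p hp q hq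
    have hb1' : u2 ≤ (l : ℝ) := hcoord1 p hp q hq
    have hu1nn : 0 ≤ u1 := by linarith
    have hu2nn : 0 ≤ u2 := by linarith
    have ha' : (a : ℝ) ≤ -1 := by rw [abs_of_neg hao] at ha1; linarith
    have hb' : (b : ℝ) ≤ -1 := by rw [abs_of_neg hbo] at hb1; linarith
    have key := pair_le_width2 hc ![a, b] hq hp
    simp [Fin.sum_univ_two] at key
    nlinarith [key, hs, hu1nn, hu2nn, ha', hb']
  case inl.inr =>
    -- a < 0, b > 0 : use (1,-1) pair, swapped
    obtain ⟨p, hp, q, hq, hpq⟩ := width2_exists_pair hc hne ![1, -1]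
    simp [Fin.sum_univ_two] at hpq
    set u1 := p 0 - q 0 with hu1
    set u2 := q 1 - p 1 with hu2
    have hs : (l : ℝ) ≤ u1 + u2 := by rw [hu1, hu2]; linarith [h2, hpq]
    have hb0 : u1 ≤ (l : ℝ) := hcoord0 p hp q hq
    have hb1' : u2 ≤ (l : ℝ) := hcoord1 q hq p hp
    have hu1nn : 0 ≤ u1 := by linarith
    have hu2nn : 0 ≤ u2 := by linarith
    have ha' : (a : ℝ) ≤ -1 := by rw [abs_of_neg hao] at ha1; linarith
    have hb' : (1 : ℝ) ≤ (b : ℝ) := by rw [abs_of_pos hbo] at hb1; linarith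
    have key := pair_le_width2 hc ![a, b] hq hp
    simp [Fin.sum_univ_two] at key
    nlinarith [key, hs, hu1nn, hu2nn, ha', hb']
  case inr.inl =>
    -- a > 0, b < 0 : use (1,-1) pair
    obtain ⟨p, hp, q, hq, hpq⟩ := width2_exists_pair hc hne ![1, -1]
    simp [Fin.sum_univ_two] at hpq
    set u1 := p 0 - q 0 with hu1
    set u2 := q 1 - p 1 with hu2
    have hs : (l : ℝ) ≤ u1 + u2 := by rw [hu1, hu2]; linarith [h2, hpq]
    have hb0 : u1 ≤ (l : ℝ) := hcoord0 p hp q hq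
    have hb1' : u2 ≤ (l : ℝ) := hcoord1 q hq p hp
    have hu1nn : 0 ≤ u1 := by linarith
    have hu2nn : 0 ≤ u2 := by linarith
    have ha' : (1 : ℝ) ≤ (a : ℝ) := by rw [abs_of_pos hao] at ha1; linarith
    have hb' : (b : ℝ) ≤ -1 := by rw [abs_of_neg hbo] at hb1; linarith
    have key := pair_le_width2 hc ![a, b] hp hq
    simp [Fin.sum_univ_two] at key
    nlinarith [key, hs, hu1nn, hu2nn, ha', hb']
  case inr.inr =>
    -- a > 0, b > 0 : use (1,1) pair
    obtain ⟨p, hp, q, hq, hpq⟩ := width2_exists_pair hc hne ![1, 1]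
    simp [Fin.sum_univ_two] at hpq
    set u1 := p 0 - q 0 with hu1
    set u2 := p 1 - q 1 with hu2
    have hs : (l : ℝ) ≤ u1 + u2 := by rw [hu1, hu2]; linarith [h1, hpq]
    have hb0 : u1 ≤ (l : ℝ) := hcoord0 p hp q hq
    have hb1' : u2 ≤ (l : ℝ) := hcoord1 p hp q hq
    have hu1nn : 0 ≤ u1 := by linarith
    have hu2nn : 0 ≤ u2 := by linarith
    have ha' : (1 : ℝ) ≤ (a : ℝ) := by rw [abs_of_pos hao] at ha1; linarith
    have hb' : (1 : ℝ) ≤ (b : ℝ) := by rw [abs_of_pos hbo] at hb1; linarith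
    have key := pair_le_width2 hc ![a, b] hp hq
    simp [Fin.sum_univ_two] at key
    nlinarith [key, hs, hu1nn, hu2nn, ha', hb']
end

section
/- Let P ⊂ ℝ² be a lattice polygon with e_□(P) = l. Suppose Δ_P(x+y) ≥ l and Δ_P(x−y) ≥ l. Then for all nonzero integers a and b, Δ_P(ax+by) ≥ l·min(|a|,|b|). -/
def fval2 (a : Fin 2 → ℤ) (p : Fin 2 → ℝ) : ℝ := ∑ i, (a i : ℝ) * p i

lemma fval2_continuous (a : Fin 2 → ℤ) : Continuous (fval2 a) := by
  unfold fval2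
  exact continuous_finset_sum _ fun i _ => continuous_const.mul (continuous_apply i)

lemma width2_attain (P : Set (Fin 2 → ℝ)) (hc : IsCompact P) (hne : P.Nonempty)
    (u : Fin 2 → ℤ) :
    ∃ p ∈ P, ∃ q ∈ P, (∀ r ∈ P, fval2 u r ≤ fval2 u p) ∧ (∀ r ∈ P, fval2 u q ≤ fval2 u r) ∧
      width2 P u = fval2 u p - fval2 u q := by
  obtain ⟨p, hp, hmax⟩ := hc.exists_isMaxOn hne (fval2_continuous u).continuousOn
  obtain ⟨q, hq, hmin⟩ := hc.exists_isMinOn hne (fval2_continuous u).continuousOn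
  have hmax' : ∀ r ∈ P, fval2 u r ≤ fval2 u p := fun r hr => isMaxOn_iff.1 hmax r hr
  have hmin' : ∀ r ∈ P, fval2 u q ≤ fval2 u r := fun r hr => isMinOn_iff.1 hmin r hr
  refine ⟨p, hp, q, hq, hmax', hmin', ?_⟩
  have h1 : sSup (fval2 u '' P) = fval2 u p :=
    IsGreatest.csSup_eq ⟨⟨p, hp, rfl⟩, by rintro _ ⟨r, hr, rfl⟩; exact hmax' r hr⟩
  have h2 : sInf (fval2 u '' P) = fval2 u q :=
    IsLeast.csInf_eq ⟨⟨q, hq, rfl⟩, by rintro _ ⟨r, hr, rfl⟩; exact hmin' r hr⟩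
  show sSup (fval2 u '' P) - sInf (fval2 u '' P) = _
  rw [h1, h2]

lemma fval2_sub (u v : Fin 2 → ℤ) (p : Fin 2 → ℝ) :
    fval2 (u - v) p = fval2 u p - fval2 v p := by
  unfold fval2
  rw [← Finset.sum_sub_distrib]
  congr 1; funext i; push_cast [Pi.sub_apply]; ring

lemma fval2_smul (c : ℤ) (u : Fin 2 → ℤ) (p : Fin 2 → ℝ) :
    fval2 (c • u) p = (c : ℝ) * fval2 u p := by
  unfold fval2
  rw [Finset.mul_sum]
  congr 1; funext i; push_cast [Pi.smul_apply, smul_eq_mul]; ring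

lemma width2_key (P : Set (Fin 2 → ℝ)) (hc : IsCompact P) (hne : P.Nonempty)
    (u v : Fin 2 → ℤ) : width2 P u - width2 P v ≤ width2 P (u - v) := by
  obtain ⟨p, hp, q, hq, hmax, hmin, hEq⟩ := width2_attain P hc hne u
  have hbA : ∀ w : Fin 2 → ℤ, BddAbove (fval2 w '' P) :=
    fun w => (hc.image (fval2_continuous w)).bddAbove
  have hbB : ∀ w : Fin 2 → ℤ, BddBelow (fval2 w '' P) :=
    fun w => (hc.image (fval2_continuous w)).bddBelow
  have h1 : fval2 (u - v) p ≤ sSup (fval2 (u - v) '' P) := le_csSup (hbA _) ⟨p, hp, rfl⟩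
  have h2 : sInf (fval2 (u - v) '' P) ≤ fval2 (u - v) q := csInf_le (hbB _) ⟨q, hq, rfl⟩
  have h3 : fval2 v p ≤ sSup (fval2 v '' P) := le_csSup (hbA _) ⟨p, hp, rfl⟩
  have h4 : sInf (fval2 v '' P) ≤ fval2 v q := csInf_le (hbB _) ⟨q, hq, rfl⟩
  have e1 : width2 P (u - v) = sSup (fval2 (u - v) '' P) - sInf (fval2 (u - v) '' P) := rfl
  have e2 : width2 P v = sSup (fval2 v '' P) - sInf (fval2 v '' P) := rfl
  have s1 := fval2_sub u v p
  have s2 := fval2_sub u v q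
  linarith

lemma width2_smul (P : Set (Fin 2 → ℝ)) (hc : IsCompact P) (hne : P.Nonempty)
    (c : ℤ) (u : Fin 2 → ℤ) : width2 P (c • u) = ((|c| : ℤ) : ℝ) * width2 P u := by
  obtain ⟨p, hp, q, hq, hmax, hmin, hEq⟩ := width2_attain P hc hne u
  rcases le_or_gt 0 c with hc0 | hc0
  · have hg : IsGreatest (fval2 (c • u) '' P) (fval2 (c • u) p) :=
      ⟨⟨p, hp, rfl⟩, by
        rintro _ ⟨r, hr, rfl⟩
        rw [fval2_smul, fval2_smul]
        exact mul_le_mul_of_nonneg_left (hmax r hr) (by exact_mod_cast hc0)⟩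
    have hl : IsLeast (fval2 (c • u) '' P) (fval2 (c • u) q) :=
      ⟨⟨q, hq, rfl⟩, by
        rintro _ ⟨r, hr, rfl⟩
        rw [fval2_smul, fval2_smul]
        exact mul_le_mul_of_nonneg_left (hmin r hr) (by exact_mod_cast hc0)⟩
    have : width2 P (c • u) = fval2 (c • u) p - fval2 (c • u) q := by
      show sSup (fval2 (c • u) '' P) - sInf (fval2 (c • u) '' P) = _
      rw [hg.csSup_eq, hl.csInf_eq]
    rw [this, fval2_smul, fval2_smul, hEq, abs_of_nonneg hc0]
    ring
  · have hg : IsGreatest (fval2 (c • u) '' P) (fval2 (c • u) q) :=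
      ⟨⟨q, hq, rfl⟩, by
        rintro _ ⟨r, hr, rfl⟩
        rw [fval2_smul, fval2_smul]
        exact mul_le_mul_of_nonpos_left (hmin r hr) (by exact_mod_cast hc0.le)⟩
    have hl : IsLeast (fval2 (c • u) '' P) (fval2 (c • u) p) :=
      ⟨⟨p, hp, rfl⟩, by
        rintro _ ⟨r, hr, rfl⟩
        rw [fval2_smul, fval2_smul]
        exact mul_le_mul_of_nonpos_left (hmax r hr) (by exact_mod_cast hc0.le)⟩
    have : width2 P (c • u) = fval2 (c • u) q - fval2 (c • u) p := by
      show sSup (fval2 (c • u) '' P) - sInf (fval2 (c • u) '' P) = _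
      rw [hg.csSup_eq, hl.csInf_eq]
    rw [this, fval2_smul, fval2_smul, hEq, abs_of_neg hc0]
    push_cast
    ring

lemma width2_main_case (P : Set (Fin 2 → ℝ)) (hc : IsCompact P) (hne : P.Nonempty)
    (l : ℝ) (d e : Fin 2 → ℤ) (hd : l ≤ width2 P d) (heL : width2 P e ≤ l)
    (w : Fin 2 → ℤ) (c1 c2 : ℤ) (hw : w = c1 • d - c2 • e) :
    ((|c1| - |c2| : ℤ) : ℝ) * l ≤ width2 P w := by
  have hkey := width2_key P hc hne (c1 • d) (c2 • e)
  rw [width2_smul P hc hne, width2_smul P hc hne, ← hw] at hkey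
  have A1 : ((|c1| : ℤ) : ℝ) * l ≤ ((|c1| : ℤ) : ℝ) * width2 P d :=
    mul_le_mul_of_nonneg_left hd (by positivity)
  have A2 : ((|c2| : ℤ) : ℝ) * width2 P e ≤ ((|c2| : ℤ) : ℝ) * l :=
    mul_le_mul_of_nonneg_left heL (by positivity)
  push_cast at A1 A2 hkey ⊢
  linarith

/-- If `e_□(P) = l` and `Δ_P(x+y) ≥ l`, `Δ_P(x−y) ≥ l`, then for all nonzero integers
`a, b` we have `Δ_P(ax+by) ≥ l·min(|a|,|b|)`. -/
theorem width_ge_mul_min_of_diag_ge (V : Finset (Fin 2 → ℤ)) (hV : V.Nonempty)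
    (P : Set (Fin 2 → ℝ)) (hP : P = latticePoly2 V) (l : ℤ)
    (he : max (width2 P ![1, 0]) (width2 P ![0, 1]) = (l : ℝ))
    (h1 : (l : ℝ) ≤ width2 P ![1, 1]) (h2 : (l : ℝ) ≤ width2 P ![1, -1]) :
    ∀ a b : ℤ, a ≠ 0 → b ≠ 0 → ((l * min |a| |b| : ℤ) : ℝ) ≤ width2 P ![a, b] := by
  intro a b ha hb
  have hcP : IsCompact P := by
    rw [hP, latticePoly2]
    exact (V.finite_toSet.image _).isCompact_convexHull (𝕜 := ℝ)
  have hne : P.Nonempty := by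
    obtain ⟨v, hv⟩ := hV
    exact ⟨_, by rw [hP]; exact subset_convexHull ℝ _ ⟨v, hv, rfl⟩⟩
  have hx : width2 P ![1, 0] ≤ (l : ℝ) := he ▸ le_max_left _ _
  have hy : width2 P ![0, 1] ≤ (l : ℝ) := he ▸ le_max_right _ _
  rcases Ne.lt_or_gt ha with ha' | ha' <;> rcases Ne.lt_or_gt hb with hb' | hb' <;>
    rcases le_or_gt |a| |b| with hab | hab
  -- a<0, b<0, |a|≤|b|
  · have hab' : -a ≤ -b := by rwa [abs_of_neg ha', abs_of_neg hb'] at hab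
    have H := width2_main_case P hcP hne (l : ℝ) ![1, 1] ![1, 0] h1 hx ![a, b] b (b - a)
      (by funext i; fin_cases i <;> simp [Pi.sub_apply, Pi.smul_apply, smul_eq_mul])
    have hm' : min |a| |b| = |b| - |b - a| := by
      rw [abs_of_neg ha', abs_of_neg hb', abs_of_nonpos (show b - a ≤ 0 by omega)]; omega
    calc ((l * min |a| |b| : ℤ) : ℝ) = ((|b| - |b - a| : ℤ) : ℝ) * (l : ℝ) := by
          rw [hm']; push_cast; ring
      _ ≤ _ := H
  -- a<0, b<0, |b|<|a|
  · have hab' : -b < -a := by rwa [abs_of_neg ha', abs_of_neg hb'] at hab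
    have H := width2_main_case P hcP hne (l : ℝ) ![1, 1] ![0, 1] h1 hy ![a, b] a (a - b)
      (by funext i; fin_cases i <;> simp [Pi.sub_apply, Pi.smul_apply, smul_eq_mul])
    have hm' : min |a| |b| = |a| - |a - b| := by
      rw [abs_of_neg ha', abs_of_neg hb', abs_of_nonpos (show a - b ≤ 0 by omega)]; omega
    calc ((l * min |a| |b| : ℤ) : ℝ) = ((|a| - |a - b| : ℤ) : ℝ) * (l : ℝ) := by
          rw [hm']; push_cast; ring
      _ ≤ _ := H
  -- a<0, b>0, |a|≤|b|
  · have hab' : -a ≤ b := by rwa [abs_of_neg ha', abs_of_pos hb'] at hab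
    have H := width2_main_case P hcP hne (l : ℝ) ![1, -1] ![1, 0] h2 hx ![a, b] (-b) (-b - a)
      (by funext i; fin_cases i <;> simp [Pi.sub_apply, Pi.smul_apply, smul_eq_mul])
    have hm' : min |a| |b| = |-b| - |-b - a| := by
      rw [abs_of_neg ha', abs_of_pos hb', abs_of_neg (show -b < 0 by omega),
        abs_of_nonpos (show -b - a ≤ 0 by omega)]; omega
    calc ((l * min |a| |b| : ℤ) : ℝ) = ((|-b| - |-b - a| : ℤ) : ℝ) * (l : ℝ) := by
          rw [hm']; push_cast; ring
      _ ≤ _ := H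
  -- a<0, b>0, |b|<|a|
  · have hab' : b < -a := by rwa [abs_of_neg ha', abs_of_pos hb'] at hab
    have H := width2_main_case P hcP hne (l : ℝ) ![1, -1] ![0, 1] h2 hy ![a, b] a (-a - b)
      (by funext i; fin_cases i <;> simp [Pi.sub_apply, Pi.smul_apply, smul_eq_mul])
    have hm' : min |a| |b| = |a| - |-a - b| := by
      rw [abs_of_neg ha', abs_of_pos hb', abs_of_pos (show 0 < -a - b by omega)]; omega
    calc ((l * min |a| |b| : ℤ) : ℝ) = ((|a| - |-a - b| : ℤ) : ℝ) * (l : ℝ) := by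
          rw [hm']; push_cast; ring
      _ ≤ _ := H
  -- a>0, b<0, |a|≤|b|
  · have hab' : a ≤ -b := by rwa [abs_of_pos ha', abs_of_neg hb'] at hab
    have H := width2_main_case P hcP hne (l : ℝ) ![1, -1] ![1, 0] h2 hx ![a, b] (-b) (-b - a)
      (by funext i; fin_cases i <;> simp [Pi.sub_apply, Pi.smul_apply, smul_eq_mul])
    have hm' : min |a| |b| = |-b| - |-b - a| := by
      rw [abs_of_pos ha', abs_of_neg hb', abs_of_pos (show 0 < -b by omega),
        abs_of_nonneg (show 0 ≤ -b - a by omega)]; omega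
    calc ((l * min |a| |b| : ℤ) : ℝ) = ((|-b| - |-b - a| : ℤ) : ℝ) * (l : ℝ) := by
          rw [hm']; push_cast; ring
      _ ≤ _ := H
  -- a>0, b<0, |b|<|a|
  · have hab' : -b < a := by rwa [abs_of_pos ha', abs_of_neg hb'] at hab
    have H := width2_main_case P hcP hne (l : ℝ) ![1, -1] ![0, 1] h2 hy ![a, b] a (-a - b)
      (by funext i; fin_cases i <;> simp [Pi.sub_apply, Pi.smul_apply, smul_eq_mul])
    have hm' : min |a| |b| = |a| - |-a - b| := by
      rw [abs_of_pos ha', abs_of_neg hb', abs_of_nonpos (show -a - b ≤ 0 by omega)]; omega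
    calc ((l * min |a| |b| : ℤ) : ℝ) = ((|a| - |-a - b| : ℤ) : ℝ) * (l : ℝ) := by
          rw [hm']; push_cast; ring
      _ ≤ _ := H
  -- a>0, b>0, |a|≤|b|
  · have hab' : a ≤ b := by rwa [abs_of_pos ha', abs_of_pos hb'] at hab
    have H := width2_main_case P hcP hne (l : ℝ) ![1, 1] ![1, 0] h1 hx ![a, b] b (b - a)
      (by funext i; fin_cases i <;> simp [Pi.sub_apply, Pi.smul_apply, smul_eq_mul])
    have hm' : min |a| |b| = |b| - |b - a| := by
      rw [abs_of_pos ha', abs_of_pos hb', abs_of_nonneg (show 0 ≤ b - a by omega)]; omega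
    calc ((l * min |a| |b| : ℤ) : ℝ) = ((|b| - |b - a| : ℤ) : ℝ) * (l : ℝ) := by
          rw [hm']; push_cast; ring
      _ ≤ _ := H
  -- a>0, b>0, |b|<|a|
  · have hab' : b < a := by rwa [abs_of_pos ha', abs_of_pos hb'] at hab
    have H := width2_main_case P hcP hne (l : ℝ) ![1, 1] ![0, 1] h1 hy ![a, b] a (a - b)
      (by funext i; fin_cases i <;> simp [Pi.sub_apply, Pi.smul_apply, smul_eq_mul])
    have hm' : min |a| |b| = |a| - |a - b| := by
      rw [abs_of_pos ha', abs_of_pos hb', abs_of_nonneg (show 0 ≤ a - b by omega)]; omega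
    calc ((l * min |a| |b| : ℤ) : ℝ) = ((|a| - |a - b| : ℤ) : ℝ) * (l : ℝ) := by
          rw [hm']; push_cast; ring
      _ ≤ _ := H
end

section
/- Let P ⊂ ℝ² be a lattice polygon with e_□(P) = l. Suppose Δ_P(x+y) ≥ l and Δ_P(x−y) ≥ l. Then ls_□(P) = l. -/
/-- integer linear form -/
def fintF (a v : Fin 2 → ℤ) : ℤ := a 0 * v 0 + a 1 * v 1

/-- integer width over the vertex set -/
def Wd (V : Finset (Fin 2 → ℤ)) (hV : V.Nonempty) (a : Fin 2 → ℤ) : ℤ :=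
  V.sup' hV (fintF a) - V.inf' hV (fintF a)

lemma linmap (a : Fin 2 → ℤ) : IsLinearMap ℝ (fun p : Fin 2 → ℝ => ∑ i, (a i : ℝ) * p i) := by
  constructor
  · intro p q; simp [Pi.add_apply, mul_add, Finset.sum_add_distrib]
  · intro c p; simp [Finset.mul_sum, smul_eq_mul]; ring

lemma bridge_isGreatest (V : Finset (Fin 2 → ℤ)) (hV : V.Nonempty) (a : Fin 2 → ℤ) :
    IsGreatest ((fun p => ∑ i, (a i : ℝ) * p i) '' latticePoly2 V)
      ((V.sup' hV (fintF a) : ℤ) : ℝ) := by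
  obtain ⟨w, hw, hfw⟩ := Finset.exists_mem_eq_sup' hV (fintF a)
  constructor
  · refine ⟨fun i => (w i : ℝ), subset_convexHull _ _ ⟨w, hw, rfl⟩, ?_⟩
    rw [hfw]; simp only [fintF, Fin.sum_univ_two]; push_cast; ring
  · rintro x ⟨p, hp, rfl⟩
    have hsub : latticePoly2 V ⊆
        {q : Fin 2 → ℝ | (∑ i, (a i : ℝ) * q i) ≤ ((V.sup' hV (fintF a) : ℤ) : ℝ)} := by
      apply convexHull_min _ (convex_halfSpace_le (linmap a) _)
      rintro q ⟨u, hu, rfl⟩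
      have h1 : fintF a u ≤ V.sup' hV (fintF a) := Finset.le_sup' _ hu
      have h2 : (∑ i, (a i : ℝ) * (u i : ℝ)) = ((fintF a u : ℤ) : ℝ) := by
        simp only [fintF, Fin.sum_univ_two]; push_cast; ring
      simp only [Set.mem_setOf_eq, h2]
      exact_mod_cast h1
    exact hsub hp

lemma bridge_isLeast (V : Finset (Fin 2 → ℤ)) (hV : V.Nonempty) (a : Fin 2 → ℤ) :
    IsLeast ((fun p => ∑ i, (a i : ℝ) * p i) '' latticePoly2 V)
      ((V.inf' hV (fintF a) : ℤ) : ℝ) := by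
  obtain ⟨w, hw, hfw⟩ := Finset.exists_mem_eq_inf' hV (fintF a)
  constructor
  · refine ⟨fun i => (w i : ℝ), subset_convexHull _ _ ⟨w, hw, rfl⟩, ?_⟩
    rw [hfw]; simp only [fintF, Fin.sum_univ_two]; push_cast; ring
  · rintro x ⟨p, hp, rfl⟩
    have hsub : latticePoly2 V ⊆
        {q : Fin 2 → ℝ | ((V.inf' hV (fintF a) : ℤ) : ℝ) ≤ (∑ i, (a i : ℝ) * q i)} := by
      apply convexHull_min _ (convex_halfSpace_ge (linmap a) _)
      rintro q ⟨u, hu, rfl⟩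
      have h1 : V.inf' hV (fintF a) ≤ fintF a u := Finset.inf'_le _ hu
      have h2 : (∑ i, (a i : ℝ) * (u i : ℝ)) = ((fintF a u : ℤ) : ℝ) := by
        simp only [fintF, Fin.sum_univ_two]; push_cast; ring
      simp only [Set.mem_setOf_eq, h2]
      exact_mod_cast h1
    exact hsub hp

lemma width2_eq (V : Finset (Fin 2 → ℤ)) (hV : V.Nonempty) (a : Fin 2 → ℤ) :
    width2 (latticePoly2 V) a = ((Wd V hV a : ℤ) : ℝ) := by
  rw [width2, (bridge_isGreatest V hV a).csSup_eq, (bridge_isLeast V hV a).csInf_eq, Wd]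
  push_cast; ring

lemma Wd_congr (V : Finset (Fin 2 → ℤ)) (hV : V.Nonempty) {r r' : Fin 2 → ℤ}
    (h : ∀ i, r i = r' i) : Wd V hV r = Wd V hV r' := by
  have : r = r' := funext h
  rw [this]

lemma Wd_neg (V : Finset (Fin 2 → ℤ)) (hV : V.Nonempty) (r : Fin 2 → ℤ) :
    Wd V hV (fun i => -(r i)) = Wd V hV r := by
  have hf : ∀ v, fintF (fun i => -(r i)) v = -(fintF r v) := by
    intro v; simp [fintF]; ring
  have hsup : V.sup' hV (fintF (fun i => -(r i))) = -(V.inf' hV (fintF r)) := by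
    apply le_antisymm
    · apply Finset.sup'_le; intro v hv; rw [hf]
      exact neg_le_neg (Finset.inf'_le _ hv)
    · obtain ⟨v, hv, hfv⟩ := Finset.exists_mem_eq_inf' hV (fintF r)
      rw [hfv]
      calc -(fintF r v) = fintF (fun i => -(r i)) v := (hf v).symm
        _ ≤ _ := Finset.le_sup' _ hv
  have hinf : V.inf' hV (fintF (fun i => -(r i))) = -(V.sup' hV (fintF r)) := by
    apply le_antisymm
    · obtain ⟨v, hv, hfv⟩ := Finset.exists_mem_eq_sup' hV (fintF r)
      rw [hfv]
      calc V.inf' hV (fintF (fun i => -(r i))) ≤ fintF (fun i => -(r i)) v :=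
            Finset.inf'_le _ hv
        _ = -(fintF r v) := hf v
    · apply Finset.le_inf'; intro v hv; rw [hf]
      exact neg_le_neg (Finset.le_sup' _ hv)
  rw [Wd, Wd, hsup, hinf]; ring

lemma Wd_eq_neg (V : Finset (Fin 2 → ℤ)) (hV : V.Nonempty) (r r' : Fin 2 → ℤ)
    (h : ∀ i, r i = -(r' i)) : Wd V hV r = Wd V hV r' :=
  (Wd_congr V hV (r' := fun i => -(r' i)) h).trans (Wd_neg V hV r')

lemma comb3 (V : Finset (Fin 2 → ℤ)) (hV : V.Nonempty) (c a b d : Fin 2 → ℤ)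
    (s α β γ : ℤ) (hα : 0 ≤ α) (hβ : 0 ≤ β) (hγ : 0 ≤ γ)
    (hc : ∀ i, s * c i = α * a i + β * b i + γ * d i) :
    s * Wd V hV c ≤ α * Wd V hV a + β * Wd V hV b + γ * Wd V hV d := by
  obtain ⟨vM, hvM, hM⟩ := Finset.exists_mem_eq_sup' hV (fintF c)
  obtain ⟨vm, hvm, hm⟩ := Finset.exists_mem_eq_inf' hV (fintF c)
  have key : ∀ v : Fin 2 → ℤ,
      s * fintF c v = α * fintF a v + β * fintF b v + γ * fintF d v := by
    intro v; simp only [fintF]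
    linear_combination v 0 * hc 0 + v 1 * hc 1
  have hub : s * V.sup' hV (fintF c) ≤
      α * V.sup' hV (fintF a) + β * V.sup' hV (fintF b) + γ * V.sup' hV (fintF d) := by
    rw [hM, key vM]
    have t1 : α * fintF a vM ≤ α * V.sup' hV (fintF a) :=
      mul_le_mul_of_nonneg_left (Finset.le_sup' _ hvM) hα
    have t2 : β * fintF b vM ≤ β * V.sup' hV (fintF b) :=
      mul_le_mul_of_nonneg_left (Finset.le_sup' _ hvM) hβ
    have t3 : γ * fintF d vM ≤ γ * V.sup' hV (fintF d) :=
      mul_le_mul_of_nonneg_left (Finset.le_sup' _ hvM) hγ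
    linarith
  have hlb : α * V.inf' hV (fintF a) + β * V.inf' hV (fintF b) + γ * V.inf' hV (fintF d) ≤
      s * V.inf' hV (fintF c) := by
    rw [hm, key vm]
    have t1 : α * V.inf' hV (fintF a) ≤ α * fintF a vm :=
      mul_le_mul_of_nonneg_left (Finset.inf'_le _ hvm) hα
    have t2 : β * V.inf' hV (fintF b) ≤ β * fintF b vm :=
      mul_le_mul_of_nonneg_left (Finset.inf'_le _ hvm) hβ
    have t3 : γ * V.inf' hV (fintF d) ≤ γ * fintF d vm :=
      mul_le_mul_of_nonneg_left (Finset.inf'_le _ hvm) hγ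
    linarith
  simp only [Wd, mul_sub]
  linarith

lemma core2 (V : Finset (Fin 2 → ℤ)) (hV : V.Nonempty) (l l' : ℤ) (r : Fin 2 → ℤ)
    (ha : 1 ≤ r 0) (hb : r 1 ≠ 0)
    (h0 : Wd V hV ![1,0] ≤ l) (h1 : Wd V hV ![0,1] ≤ l)
    (h11 : l ≤ Wd V hV ![1,1]) (h1m : l ≤ Wd V hV ![1,-1])
    (hr : Wd V hV r ≤ l') : l ≤ l' := by
  rcases hb.lt_or_gt with hbneg | hbpos
  · -- r 1 ≤ -1, use (1,-1)
    have hb' : r 1 ≤ -1 := by omega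
    have key := comb3 V hV ![1,-1] ![1,0] ![0,-1] r (r 0 - r 1 - 1) (-(r 1) - 1) (r 0 - 1) 1
      (by omega) (by omega) (by omega) ?_
    · have hneg : Wd V hV ![0,-1] = Wd V hV ![0,1] := by
        rw [← Wd_neg V hV ![0,1]]
        apply Wd_congr; intro i; fin_cases i <;> simp
      rw [hneg] at key
      have t1 : (r 0 - r 1 - 1) * l ≤ (r 0 - r 1 - 1) * Wd V hV ![1,-1] :=
        mul_le_mul_of_nonneg_left h1m (by omega)
      have t2 : (-(r 1) - 1) * Wd V hV ![1,0] ≤ (-(r 1) - 1) * l :=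
        mul_le_mul_of_nonneg_left h0 (by omega)
      have t3 : (r 0 - 1) * Wd V hV ![0,1] ≤ (r 0 - 1) * l :=
        mul_le_mul_of_nonneg_left h1 (by omega)
      nlinarith
    · intro i; fin_cases i <;> simp <;> ring
  · -- r 1 ≥ 1, use (1,1)
    have hb' : 1 ≤ r 1 := by omega
    have key := comb3 V hV ![1,1] ![1,0] ![0,1] r (r 0 + r 1 - 1) (r 1 - 1) (r 0 - 1) 1
      (by omega) (by omega) (by omega) ?_
    · have t1 : (r 0 + r 1 - 1) * l ≤ (r 0 + r 1 - 1) * Wd V hV ![1,1] :=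
        mul_le_mul_of_nonneg_left h11 (by omega)
      have t2 : (r 1 - 1) * Wd V hV ![1,0] ≤ (r 1 - 1) * l :=
        mul_le_mul_of_nonneg_left h0 (by omega)
      have t3 : (r 0 - 1) * Wd V hV ![0,1] ≤ (r 0 - 1) * l :=
        mul_le_mul_of_nonneg_left h1 (by omega)
      nlinarith
    · intro i; fin_cases i <;> simp <;> ring

lemma core (V : Finset (Fin 2 → ℤ)) (hV : V.Nonempty) (l l' : ℤ) (r : Fin 2 → ℤ)
    (ha : r 0 ≠ 0) (hb : r 1 ≠ 0)
    (h0 : Wd V hV ![1,0] ≤ l) (h1 : Wd V hV ![0,1] ≤ l)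
    (h11 : l ≤ Wd V hV ![1,1]) (h1m : l ≤ Wd V hV ![1,-1])
    (hr : Wd V hV r ≤ l') : l ≤ l' := by
  rcases ha.lt_or_gt with haneg | hapos
  · refine core2 V hV l l' (fun i => -(r i)) (by show (1:ℤ) ≤ -(r 0); omega)
      (by show -(r 1) ≠ 0; omega) h0 h1 h11 h1m ?_
    rw [Wd_neg]; exact hr
  · exact core2 V hV l l' r (by omega) hb h0 h1 h11 h1m hr

/-- If `e_□(P) = l` and `Δ_P(x+y) ≥ l`, `Δ_P(x−y) ≥ l`, then `ls_□(P) = l`: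
`l` is the least integer `l'` such that `T(P) ⊆ [0,l']²` for some affine unimodular `T`. -/
theorem latticeSize_eq_of_diag_ge (V : Finset (Fin 2 → ℤ)) (hV : V.Nonempty)
    (P : Set (Fin 2 → ℝ)) (hP : P = latticePoly2 V) (l : ℤ)
    (he : max (width2 P ![1, 0]) (width2 P ![0, 1]) = (l : ℝ))
    (h1 : (l : ℝ) ≤ width2 P ![1, 1]) (h2 : (l : ℝ) ≤ width2 P ![1, -1]) :
    IsLeast {l' : ℤ | FitsInSquare P l'} l := by
  subst hP
  rw [width2_eq V hV] at he h1 h2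
  rw [width2_eq V hV] at he
  -- integer versions of hypotheses
  have hW0 : Wd V hV ![1,0] ≤ l := by
    have := le_max_left ((Wd V hV ![1,0] : ℝ)) ((Wd V hV ![0,1] : ℝ))
    rw [he] at this; exact_mod_cast this
  have hW1 : Wd V hV ![0,1] ≤ l := by
    have := le_max_right ((Wd V hV ![1,0] : ℝ)) ((Wd V hV ![0,1] : ℝ))
    rw [he] at this; exact_mod_cast this
  have hWmax : l ≤ Wd V hV ![1,0] ∨ l ≤ Wd V hV ![0,1] := by
    have : (l : ℝ) ≤ max ((Wd V hV ![1,0] : ℝ)) ((Wd V hV ![0,1] : ℝ)) := le_of_eq he.symm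
    rcases le_max_iff.mp this with h | h
    · left; exact_mod_cast h
    · right; exact_mod_cast h
  have h11 : l ≤ Wd V hV ![1,1] := by exact_mod_cast h1
  have h1m : l ≤ Wd V hV ![1,-1] := by exact_mod_cast h2
  constructor
  · -- membership: the identity matrix works
    refine ⟨1, ![-(V.inf' hV (fintF ![1,0])), -(V.inf' hV (fintF ![0,1]))],
      Or.inl (by simp), ?_⟩
    intro p hp i
    have h1map : (1 : Matrix (Fin 2) (Fin 2) ℤ).map (fun z : ℤ => (z : ℝ)) = 1 :=
      Matrix.map_one _ (by norm_num) (by norm_num)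
    rw [h1map, Matrix.one_mulVec]
    have key : ∀ a : Fin 2 → ℤ,
        ((V.inf' hV (fintF a) : ℤ) : ℝ) ≤ (∑ i, (a i : ℝ) * p i) ∧
        (∑ i, (a i : ℝ) * p i) ≤ ((V.sup' hV (fintF a) : ℤ) : ℝ) :=
      fun a => ⟨(bridge_isLeast V hV a).2 ⟨p, hp, rfl⟩,
        (bridge_isGreatest V hV a).2 ⟨p, hp, rfl⟩⟩
    have e0 : (∑ i, ((![1,0] : Fin 2 → ℤ) i : ℝ) * p i) = p 0 := by
      simp [Fin.sum_univ_two]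
    have e1 : (∑ i, ((![0,1] : Fin 2 → ℤ) i : ℝ) * p i) = p 1 := by
      simp [Fin.sum_univ_two]
    have hWd0 : ((Wd V hV ![1,0] : ℤ) : ℝ) ≤ (l : ℝ) := by exact_mod_cast hW0
    have hWd1 : ((Wd V hV ![0,1] : ℤ) : ℝ) ≤ (l : ℝ) := by exact_mod_cast hW1
    have hi2 : i = 0 ∨ i = 1 := by omega
    rcases hi2 with hi | hi <;> subst hi
    · obtain ⟨hlo, hhi⟩ := key ![1,0]
      rw [e0] at hlo hhi
      have hwd : ((Wd V hV ![1,0] : ℤ) : ℝ) =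
          ((V.sup' hV (fintF ![1,0]) : ℤ) : ℝ) - ((V.inf' hV (fintF ![1,0]) : ℤ) : ℝ) := by
        rw [Wd]; push_cast; ring
      simp only [Pi.add_apply, Matrix.cons_val_zero, Set.mem_Icc]
      push_cast
      constructor
      · linarith
      · linarith [hwd, hWd0]
    · obtain ⟨hlo, hhi⟩ := key ![0,1]
      rw [e1] at hlo hhi
      have hwd : ((Wd V hV ![0,1] : ℤ) : ℝ) =
          ((V.sup' hV (fintF ![0,1]) : ℤ) : ℝ) - ((V.inf' hV (fintF ![0,1]) : ℤ) : ℝ) := by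
        rw [Wd]; push_cast; ring
      simp only [Pi.add_apply, Matrix.cons_val_one, Matrix.head_cons, Set.mem_Icc]
      push_cast
      constructor
      · linarith
      · linarith [hwd, hWd1]
  · -- lower bound
    rintro l' ⟨A, v, hdet, hcont⟩
    -- width of each row is at most l'
    have hrow : ∀ i : Fin 2, Wd V hV (fun j => A i j) ≤ l' := by
      intro i
      obtain ⟨wM, hwM, hM⟩ := Finset.exists_mem_eq_sup' hV (fintF (fun j => A i j))
      obtain ⟨wm, hwm, hm⟩ := Finset.exists_mem_eq_inf' hV (fintF (fun j => A i j))
      have hpt : ∀ w ∈ V, ((fintF (fun j => A i j) w : ℤ) : ℝ) + (v i : ℝ) ∈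
          Set.Icc (0 : ℝ) (l' : ℝ) := by
        intro w hw
        have hmem : (fun k => (w k : ℝ)) ∈ latticePoly2 V :=
          subset_convexHull _ _ ⟨w, hw, rfl⟩
        have hc := hcont _ hmem i
        have hcompute : (((A.map (fun z : ℤ => (z : ℝ))).mulVec (fun k => (w k : ℝ)) +
            fun j => (v j : ℝ)) i) = ((fintF (fun j => A i j) w : ℤ) : ℝ) + (v i : ℝ) := by
          fin_cases i <;> simp [Matrix.mulVec, dotProduct, Matrix.map_apply, fintF,
            Fin.sum_univ_two]
        rw [hcompute] at hc
        exact hc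
      obtain ⟨_, hM2⟩ := hpt wM hwM
      obtain ⟨hm1, _⟩ := hpt wm hwm
      have : ((fintF (fun j => A i j) wM : ℤ) : ℝ) - ((fintF (fun j => A i j) wm : ℤ) : ℝ)
          ≤ (l' : ℝ) := by linarith
      have hint : fintF (fun j => A i j) wM - fintF (fun j => A i j) wm ≤ l' := by
        exact_mod_cast this
      rw [Wd, hM, hm]; exact hint
    set a := A 0 0 with ha_def
    set b := A 0 1 with hb_def
    set c := A 1 0 with hc_def
    set d := A 1 1 with hd_def
    have hdet2 : a * d - b * c = 1 ∨ a * d - b * c = -1 := by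
      rwa [Matrix.det_fin_two] at hdet
    have hrow0 : Wd V hV (fun j => A 0 j) ≤ l' := hrow 0
    have hrow1 : Wd V hV (fun j => A 1 j) ≤ l' := hrow 1
    by_cases hb0 : b = 0
    · -- a*d = ±1
      have had : a * d = 1 ∨ a * d = -1 := by
        rcases hdet2 with h | h
        · exact Or.inl (by linear_combination h + c * hb0)
        · exact Or.inr (by linear_combination h + c * hb0)
      have haunit : a = 1 ∨ a = -1 := by
        rcases had with h | h
        · exact Int.isUnit_iff.mp (IsUnit.of_mul_eq_one (a := a) d h)
        · exact Int.isUnit_iff.mp (IsUnit.of_mul_eq_one (a := a) (-d) (by linear_combination -h))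
      have hdunit : d = 1 ∨ d = -1 := by
        rcases had with h | h
        · exact Int.isUnit_iff.mp (IsUnit.of_mul_eq_one (a := d) a (by linear_combination h))
        · exact Int.isUnit_iff.mp (IsUnit.of_mul_eq_one (a := d) (-a) (by linear_combination -h))
      by_cases hc0 : c = 0
      · -- signed permutation: rows are ±e1, ±e2
        have hw0 : Wd V hV ![1,0] ≤ l' := by
          refine le_trans (le_of_eq ?_) hrow0
          rcases haunit with h | h
          · exact Wd_congr V hV (fun i => by
              fin_cases i <;> simp [← ha_def, ← hb_def, h, hb0])
          · exact Wd_eq_neg V hV _ _ (fun i => by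
              fin_cases i <;> simp [← ha_def, ← hb_def, h, hb0])
        have hw1 : Wd V hV ![0,1] ≤ l' := by
          refine le_trans (le_of_eq ?_) hrow1
          rcases hdunit with h | h
          · exact Wd_congr V hV (fun i => by
              fin_cases i <;> simp [← hc_def, ← hd_def, h, hc0])
          · exact Wd_eq_neg V hV _ _ (fun i => by
              fin_cases i <;> simp [← hc_def, ← hd_def, h, hc0])
        rcases hWmax with h | h
        · exact le_trans h hw0
        · exact le_trans h hw1
      · -- use row 1 = (c, d), both nonzero
        have hd0 : d ≠ 0 := by rcases hdunit with h | h <;> omega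
        exact core V hV l l' (fun j => A 1 j) (by simpa [← hc_def] using hc0)
          (by simpa [← hd_def] using hd0) hW0 hW1 h11 h1m hrow1
    · by_cases ha0 : a = 0
      · -- b*c = ∓1
        have hbc : b * c = 1 ∨ b * c = -1 := by
          rcases hdet2 with h | h
          · exact Or.inr (by linear_combination -h + d * ha0)
          · exact Or.inl (by linear_combination -h + d * ha0)
        have hbunit : b = 1 ∨ b = -1 := by
          rcases hbc with h | h
          · exact Int.isUnit_iff.mp (IsUnit.of_mul_eq_one (a := b) c h)
          · exact Int.isUnit_iff.mp (IsUnit.of_mul_eq_one (a := b) (-c) (by linear_combination -h))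
        have hcunit : c = 1 ∨ c = -1 := by
          rcases hbc with h | h
          · exact Int.isUnit_iff.mp (IsUnit.of_mul_eq_one (a := c) b (by linear_combination h))
          · exact Int.isUnit_iff.mp (IsUnit.of_mul_eq_one (a := c) (-b) (by linear_combination -h))
        by_cases hd0 : d = 0
        · -- rows are ±e2, ±e1
          have hw1 : Wd V hV ![0,1] ≤ l' := by
            refine le_trans (le_of_eq ?_) hrow0
            rcases hbunit with h | h
            · exact Wd_congr V hV (fun i => by
                fin_cases i <;> simp [← ha_def, ← hb_def, h, ha0])
            · exact Wd_eq_neg V hV _ _ (fun i => by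
                fin_cases i <;> simp [← ha_def, ← hb_def, h, ha0])
          have hw0 : Wd V hV ![1,0] ≤ l' := by
            refine le_trans (le_of_eq ?_) hrow1
            rcases hcunit with h | h
            · exact Wd_congr V hV (fun i => by
                fin_cases i <;> simp [← hc_def, ← hd_def, h, hd0])
            · exact Wd_eq_neg V hV _ _ (fun i => by
                fin_cases i <;> simp [← hc_def, ← hd_def, h, hd0])
          rcases hWmax with h | h
          · exact le_trans h hw0
          · exact le_trans h hw1
        · -- row 1 = (c,d) both nonzero
          have hc0 : c ≠ 0 := by rcases hcunit with h | h <;> omega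
          exact core V hV l l' (fun j => A 1 j) (by simpa [← hc_def] using hc0)
            (by simpa [← hd_def] using hd0) hW0 hW1 h11 h1m hrow1
      · -- row 0 = (a,b) both nonzero
        exact core V hV l l' (fun j => A 0 j) (by simpa [← ha_def] using ha0)
          (by simpa [← hb_def] using hb0) hW0 hW1 h11 h1m hrow0
end

section
/- Let P ⊂ ℝ² be a lattice polygon with Δ_P(x) = Δ_P(y) = l. Then ls_□(P) = l. -/
/-- Linear upper bounds on vertices extend to the convex hull. -/
lemma hull_le (V : Finset (Fin 2 → ℤ)) (c0 c1 u : ℝ)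
    (hu : ∀ v ∈ V, c0 * (v 0 : ℝ) + c1 * (v 1 : ℝ) ≤ u) :
    ∀ p ∈ latticePoly2 V, c0 * p 0 + c1 * p 1 ≤ u := by
  intro p hp
  have hsub : ((fun v : Fin 2 → ℤ => fun i => (v i : ℝ)) '' (V : Set (Fin 2 → ℤ))) ⊆
      {p : Fin 2 → ℝ | c0 * p 0 + c1 * p 1 ≤ u} := by
    rintro q ⟨v, hv, rfl⟩
    exact hu v hv
  have hconv : Convex ℝ {p : Fin 2 → ℝ | c0 * p 0 + c1 * p 1 ≤ u} := by
    intro z hz w hw s t hs ht hst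
    simp only [Set.mem_setOf_eq, Pi.add_apply, Pi.smul_apply, smul_eq_mul] at hz hw ⊢
    have h1 : s * (c0 * z 0 + c1 * z 1) ≤ s * u := mul_le_mul_of_nonneg_left hz hs
    have h2 : t * (c0 * w 0 + c1 * w 1) ≤ t * u := mul_le_mul_of_nonneg_left hw ht
    have h3 : s * u + t * u = u := by rw [← add_mul, hst, one_mul]
    nlinarith
  exact convexHull_min hsub hconv hp

lemma abs_le_abs_aux (a b : ℤ) (l l' x : ℝ) (hl : 0 < l) (hl' : l' < l) (hx : |x| ≤ l)
    (h : |(a : ℝ) * l + (b : ℝ) * x| ≤ l') : |a| ≤ |b| := by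
  have hbx : |(b : ℝ) * x| ≤ |(b : ℝ)| * l := by
    rw [abs_mul]
    exact mul_le_mul_of_nonneg_left hx (abs_nonneg _)
  have hal : |(a : ℝ)| * l ≤ l' + |(b : ℝ)| * l := by
    have e1 : |(a : ℝ)| * l = |(a : ℝ) * l| := by
      rw [abs_mul, abs_of_pos hl]
    have e2 : |(a : ℝ) * l| ≤ |(a : ℝ) * l + (b : ℝ) * x| + |(b : ℝ) * x| := by
      calc |(a : ℝ) * l| = |((a : ℝ) * l + (b : ℝ) * x) + (-((b : ℝ) * x))| := by ring_nf
        _ ≤ |(a : ℝ) * l + (b : ℝ) * x| + |(-((b : ℝ) * x))| := abs_add_le _ _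
        _ = |(a : ℝ) * l + (b : ℝ) * x| + |((b : ℝ) * x)| := by rw [abs_neg]
    rw [e1]
    linarith
  have hfin : ((|a| : ℤ) : ℝ) < ((|b| : ℤ) : ℝ) + 1 := by
    rw [Int.cast_abs, Int.cast_abs]
    nlinarith
  have hfin' : (|a| : ℤ) < |b| + 1 := by exact_mod_cast hfin
  omega

lemma key_contradiction (a b c d : ℤ) (hdet : a * d - b * c = 1 ∨ a * d - b * c = -1)
    (l l' x y : ℝ) (hl : 0 < l) (hl' : l' < l) (hx : |x| ≤ l) (hy : |y| ≤ l)
    (h1 : |(a : ℝ) * l + (b : ℝ) * x| ≤ l') (h2 : |(c : ℝ) * l + (d : ℝ) * x| ≤ l')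
    (h3 : |(a : ℝ) * y + (b : ℝ) * l| ≤ l') (h4 : |(c : ℝ) * y + (d : ℝ) * l| ≤ l') :
    False := by
  have hab : |a| ≤ |b| := abs_le_abs_aux a b l l' x hl hl' hx h1
  have hcd : |c| ≤ |d| := abs_le_abs_aux c d l l' x hl hl' hx h2
  have hba : |b| ≤ |a| := by
    apply abs_le_abs_aux b a l l' y hl hl' hy
    have e : (b : ℝ) * l + (a : ℝ) * y = (a : ℝ) * y + (b : ℝ) * l := by ring
    rw [e]; exact h3
  have hdc : |d| ≤ |c| := by
    apply abs_le_abs_aux d c l l' y hl hl' hy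
    have e : (d : ℝ) * l + (c : ℝ) * y = (c : ℝ) * y + (d : ℝ) * l := by ring
    rw [e]; exact h4
  have e1 : a = b ∨ a = -b := abs_eq_abs.mp (le_antisymm hab hba)
  have e2 : c = d ∨ c = -d := abs_eq_abs.mp (le_antisymm hcd hdc)
  have hpar : a * d - b * c = 0 ∨ a * d - b * c = 2 * (b * d) ∨
      a * d - b * c = -(2 * (b * d)) := by
    rcases e1 with h | h <;> rcases e2 with h' | h' <;> rw [h, h']
    · left; ring
    · right; left; ring
    · right; right; ring
    · left; ring
  have hex : ∃ t k : ℤ, (t = 1 ∨ t = -1) ∧ (t = 0 ∨ t = 2 * k ∨ t = -(2 * k)) :=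
    ⟨_, _, hdet, hpar⟩
  obtain ⟨t, k, ht, hk⟩ := hex
  omega

/-- If `Δ_P(x) = Δ_P(y) = l` then `ls_□(P) = l`. -/
theorem latticeSize_eq_of_touch (V : Finset (Fin 2 → ℤ)) (hV : V.Nonempty)
    (P : Set (Fin 2 → ℝ)) (hP : P = latticePoly2 V) (l : ℤ)
    (hx : width2 P ![1, 0] = (l : ℝ)) (hy : width2 P ![0, 1] = (l : ℝ)) :
    IsLeast {l' : ℤ | FitsInSquare P l'} l := by
  classical
  obtain ⟨vx, hvxV, hvxmax⟩ := V.exists_max_image (fun v => v 0) hV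
  obtain ⟨ux, huxV, huxmin⟩ := V.exists_min_image (fun v => v 0) hV
  obtain ⟨vy, hvyV, hvymax⟩ := V.exists_max_image (fun v => v 1) hV
  obtain ⟨uy, huyV, huymin⟩ := V.exists_min_image (fun v => v 1) hV
  have hmemP : ∀ v ∈ V, (fun i => ((v i : ℝ))) ∈ P := by
    intro v hv
    rw [hP]
    exact subset_convexHull ℝ _ ⟨v, hv, rfl⟩
  have hub0 : ∀ p ∈ P, p 0 ≤ ((vx 0 : ℤ) : ℝ) := by
    intro p hp
    have := hull_le V 1 0 ((vx 0 : ℤ) : ℝ) (fun v hv => by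
      have h : ((v 0 : ℤ) : ℝ) ≤ ((vx 0 : ℤ) : ℝ) := by exact_mod_cast hvxmax v hv
      linarith) p (hP ▸ hp)
    linarith
  have hlb0 : ∀ p ∈ P, ((ux 0 : ℤ) : ℝ) ≤ p 0 := by
    intro p hp
    have := hull_le V (-1) 0 (-((ux 0 : ℤ) : ℝ)) (fun v hv => by
      have h : ((ux 0 : ℤ) : ℝ) ≤ ((v 0 : ℤ) : ℝ) := by exact_mod_cast huxmin v hv
      linarith) p (hP ▸ hp)
    linarith
  have hub1 : ∀ p ∈ P, p 1 ≤ ((vy 1 : ℤ) : ℝ) := by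
    intro p hp
    have := hull_le V 0 1 ((vy 1 : ℤ) : ℝ) (fun v hv => by
      have h : ((v 1 : ℤ) : ℝ) ≤ ((vy 1 : ℤ) : ℝ) := by exact_mod_cast hvymax v hv
      linarith) p (hP ▸ hp)
    linarith
  have hlb1 : ∀ p ∈ P, ((uy 1 : ℤ) : ℝ) ≤ p 1 := by
    intro p hp
    have := hull_le V 0 (-1) (-((uy 1 : ℤ) : ℝ)) (fun v hv => by
      have h : ((uy 1 : ℤ) : ℝ) ≤ ((v 1 : ℤ) : ℝ) := by exact_mod_cast huymin v hv
      linarith) p (hP ▸ hp)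
    linarith
  have hfx : (fun p : Fin 2 → ℝ => ∑ i, ((![1, 0] : Fin 2 → ℤ) i : ℝ) * p i) =
      (fun p => p 0) := by
    funext p
    simp [Fin.sum_univ_two]
  have hfy : (fun p : Fin 2 → ℝ => ∑ i, ((![0, 1] : Fin 2 → ℤ) i : ℝ) * p i) =
      (fun p => p 1) := by
    funext p
    simp [Fin.sum_univ_two]
  have hwx : ((vx 0 : ℤ) : ℝ) - ((ux 0 : ℤ) : ℝ) = (l : ℝ) := by
    rw [width2, hfx] at hx
    have hG : IsGreatest ((fun p : Fin 2 → ℝ => p 0) '' P) ((vx 0 : ℤ) : ℝ) :=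
      ⟨⟨_, hmemP vx hvxV, rfl⟩, by rintro r ⟨p, hp, rfl⟩; exact hub0 p hp⟩
    have hL : IsLeast ((fun p : Fin 2 → ℝ => p 0) '' P) ((ux 0 : ℤ) : ℝ) :=
      ⟨⟨_, hmemP ux huxV, rfl⟩, by rintro r ⟨p, hp, rfl⟩; exact hlb0 p hp⟩
    rw [hG.csSup_eq, hL.csInf_eq] at hx
    exact hx
  have hwy : ((vy 1 : ℤ) : ℝ) - ((uy 1 : ℤ) : ℝ) = (l : ℝ) := by
    rw [width2, hfy] at hy
    have hG : IsGreatest ((fun p : Fin 2 → ℝ => p 1) '' P) ((vy 1 : ℤ) : ℝ) :=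
      ⟨⟨_, hmemP vy hvyV, rfl⟩, by rintro r ⟨p, hp, rfl⟩; exact hub1 p hp⟩
    have hL : IsLeast ((fun p : Fin 2 → ℝ => p 1) '' P) ((uy 1 : ℤ) : ℝ) :=
      ⟨⟨_, hmemP uy huyV, rfl⟩, by rintro r ⟨p, hp, rfl⟩; exact hlb1 p hp⟩
    rw [hG.csSup_eq, hL.csInf_eq] at hy
    exact hy
  constructor
  · -- FitsInSquare P l
    refine ⟨1, ![-(ux 0), -(uy 1)], Or.inl (by simp), ?_⟩
    intro p hp i
    have hmap : (1 : Matrix (Fin 2) (Fin 2) ℤ).map (fun z : ℤ => (z : ℝ)) = 1 :=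
      Matrix.map_one _ Int.cast_zero Int.cast_one
    rw [hmap, Matrix.one_mulVec]
    have h1 := hlb0 p hp
    have h2 := hub0 p hp
    have h3 := hlb1 p hp
    have h4 := hub1 p hp
    fin_cases i <;> simp only [Pi.add_apply] <;> rw [Set.mem_Icc] <;>
      constructor <;> push_cast <;> simp <;> linarith
  · -- lower bound
    rintro l' ⟨A, w, hdet, hbound⟩
    have hcomp : ∀ z : Fin 2 → ℝ, ∀ i : Fin 2,
        ((A.map (fun z : ℤ => (z : ℝ))).mulVec z + fun j => (w j : ℝ)) i =
        (A i 0 : ℝ) * z 0 + (A i 1 : ℝ) * z 1 + (w i : ℝ) := by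
      intro z i
      fin_cases i <;> simp [Matrix.mulVec, dotProduct, Fin.sum_univ_two, Matrix.map_apply]
    have hrow : ∀ i : Fin 2, ∀ z ∈ P, ∀ z' ∈ P,
        |(A i 0 : ℝ) * (z 0 - z' 0) + (A i 1 : ℝ) * (z 1 - z' 1)| ≤ (l' : ℝ) := by
      intro i z hz z' hz'
      have h1 := hbound z hz i
      have h2 := hbound z' hz' i
      rw [hcomp, Set.mem_Icc] at h1 h2
      rw [abs_le]
      constructor <;> nlinarith [h1.1, h1.2, h2.1, h2.2]
    have hl'0 : (0 : ℝ) ≤ (l' : ℝ) := by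
      have := hbound _ (hmemP vx hvxV) 0
      rw [Set.mem_Icc] at this
      linarith [this.1, this.2]
    by_contra hcon
    simp only [Set.mem_setOf_eq, not_le] at hcon
    have hlR : (l' : ℝ) < (l : ℝ) := by exact_mod_cast hcon
    have hlpos : (0 : ℝ) < (l : ℝ) := lt_of_le_of_lt hl'0 hlR
    have hxabs : |((vx 1 : ℤ) : ℝ) - ((ux 1 : ℤ) : ℝ)| ≤ (l : ℝ) := by
      have b1 : ((uy 1 : ℤ) : ℝ) ≤ ((vx 1 : ℤ) : ℝ) := by exact_mod_cast huymin vx hvxV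
      have b2 : ((vx 1 : ℤ) : ℝ) ≤ ((vy 1 : ℤ) : ℝ) := by exact_mod_cast hvymax vx hvxV
      have b3 : ((uy 1 : ℤ) : ℝ) ≤ ((ux 1 : ℤ) : ℝ) := by exact_mod_cast huymin ux huxV
      have b4 : ((ux 1 : ℤ) : ℝ) ≤ ((vy 1 : ℤ) : ℝ) := by exact_mod_cast hvymax ux huxV
      rw [abs_le]
      constructor <;> linarith
    have hyabs : |((vy 0 : ℤ) : ℝ) - ((uy 0 : ℤ) : ℝ)| ≤ (l : ℝ) := by
      have b1 : ((ux 0 : ℤ) : ℝ) ≤ ((vy 0 : ℤ) : ℝ) := by exact_mod_cast huxmin vy hvyV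
      have b2 : ((vy 0 : ℤ) : ℝ) ≤ ((vx 0 : ℤ) : ℝ) := by exact_mod_cast hvxmax vy hvyV
      have b3 : ((ux 0 : ℤ) : ℝ) ≤ ((uy 0 : ℤ) : ℝ) := by exact_mod_cast huxmin uy huyV
      have b4 : ((uy 0 : ℤ) : ℝ) ≤ ((vx 0 : ℤ) : ℝ) := by exact_mod_cast hvxmax uy huyV
      rw [abs_le]
      constructor <;> linarith
    have c1 : |(A 0 0 : ℝ) * (l : ℝ) + (A 0 1 : ℝ) * (((vx 1 : ℤ) : ℝ) - ((ux 1 : ℤ) : ℝ))| ≤ (l' : ℝ) := by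
      have h := hrow 0 _ (hmemP vx hvxV) _ (hmemP ux huxV)
      rw [hwx] at h
      exact h
    have c2 : |(A 1 0 : ℝ) * (l : ℝ) + (A 1 1 : ℝ) * (((vx 1 : ℤ) : ℝ) - ((ux 1 : ℤ) : ℝ))| ≤ (l' : ℝ) := by
      have h := hrow 1 _ (hmemP vx hvxV) _ (hmemP ux huxV)
      rw [hwx] at h
      exact h
    have c3 : |(A 0 0 : ℝ) * (((vy 0 : ℤ) : ℝ) - ((uy 0 : ℤ) : ℝ)) + (A 0 1 : ℝ) * (l : ℝ)| ≤ (l' : ℝ) := by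
      have h := hrow 0 _ (hmemP vy hvyV) _ (hmemP uy huyV)
      rw [hwy] at h
      exact h
    have c4 : |(A 1 0 : ℝ) * (((vy 0 : ℤ) : ℝ) - ((uy 0 : ℤ) : ℝ)) + (A 1 1 : ℝ) * (l : ℝ)| ≤ (l' : ℝ) := by
      have h := hrow 1 _ (hmemP vy hvyV) _ (hmemP uy huyV)
      rw [hwy] at h
      exact h
    rw [Matrix.det_fin_two] at hdet
    exact key_contradiction (A 0 0) (A 0 1) (A 1 0) (A 1 1) hdet (l : ℝ) (l' : ℝ)
      (((vx 1 : ℤ) : ℝ) - ((ux 1 : ℤ) : ℝ)) (((vy 0 : ℤ) : ℝ) - ((uy 0 : ℤ) : ℝ))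
      hlpos hlR hxabs hyabs c1 c2 c3 c4
end

section
/- Let P ⊂ ℝ² be a lattice polygon with Δ_P(x) = Δ_P(y) = l. Then the lattice width of P satisfies w(P) = min(l, Δ_P(x+y), Δ_P(x−y)). -/
lemma width2_eq_s5 (V : Finset (Fin 2 → ℤ)) (hV : V.Nonempty) (a : Fin 2 → ℤ) :
    width2 (latticePoly2 V) a
      = ((V.sup' hV (fun v => ∑ i, a i * v i) : ℤ) : ℝ)
        - ((V.inf' hV (fun v => ∑ i, a i * v i) : ℤ) : ℝ) := by
  set f : (Fin 2 → ℝ) → ℝ := fun p => ∑ i, (a i : ℝ) * p i with hf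
  have hlin : IsLinearMap ℝ f := by
    constructor
    · intro x y; simp only [hf, Fin.sum_univ_two, Pi.add_apply]; ring
    · intro c x; simp only [hf, Fin.sum_univ_two, smul_eq_mul, Pi.smul_apply]; ring
  set M : ℝ := ((V.sup' hV (fun v => ∑ i, a i * v i) : ℤ) : ℝ)
  set m : ℝ := ((V.inf' hV (fun v => ∑ i, a i * v i) : ℤ) : ℝ)
  have hfv : ∀ v : Fin 2 → ℤ, f (fun i => (v i : ℝ)) = ((∑ i, a i * v i : ℤ) : ℝ) := by
    intro v; simp [hf]
  have hub : ∀ x ∈ f '' latticePoly2 V, x ≤ M := by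
    rintro x ⟨p, hp, rfl⟩
    have : latticePoly2 V ⊆ {q | f q ≤ M} := by
      apply convexHull_min _ (convex_halfSpace_le hlin M)
      rintro q ⟨v, hv, rfl⟩
      rw [Set.mem_setOf_eq, hfv]
      exact Int.cast_le.mpr (Finset.le_sup' (fun v : Fin 2 → ℤ => ∑ i, a i * v i) hv)
    exact this hp
  have hlb : ∀ x ∈ f '' latticePoly2 V, m ≤ x := by
    rintro x ⟨p, hp, rfl⟩
    have : latticePoly2 V ⊆ {q | m ≤ f q} := by
      apply convexHull_min _ (convex_halfSpace_ge hlin m)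
      rintro q ⟨v, hv, rfl⟩
      rw [Set.mem_setOf_eq, hfv]
      exact Int.cast_le.mpr (Finset.inf'_le (fun v : Fin 2 → ℤ => ∑ i, a i * v i) hv)
    exact this hp
  have hmemV : ∀ v ∈ V, (fun i => ((v i : ℝ))) ∈ latticePoly2 V := by
    intro v hv
    exact subset_convexHull ℝ _ ⟨v, hv, rfl⟩
  obtain ⟨vM, hvM, hvMe⟩ := Finset.exists_mem_eq_sup' hV (fun v => ∑ i, a i * v i)
  obtain ⟨vm, hvm, hvme⟩ := Finset.exists_mem_eq_inf' hV (fun v => ∑ i, a i * v i)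
  have hMmem : M ∈ f '' latticePoly2 V := by
    refine ⟨_, hmemV vM hvM, ?_⟩
    rw [hfv]; exact congrArg _ hvMe.symm
  have hmmem : m ∈ f '' latticePoly2 V := by
    refine ⟨_, hmemV vm hvm, ?_⟩
    rw [hfv]; exact congrArg _ hvme.symm
  have hsup : sSup (f '' latticePoly2 V) = M :=
    le_antisymm (csSup_le ⟨M, hMmem⟩ hub) (le_csSup ⟨M, hub⟩ hMmem)
  have hinf : sInf (f '' latticePoly2 V) = m :=
    le_antisymm (csInf_le ⟨m, hlb⟩ hmmem) (le_csInf ⟨m, hmmem⟩ hlb)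
  rw [width2, hsup, hinf]

lemma core_pos (p q l W d e : ℤ) (hp : 1 ≤ p) (hq : 1 ≤ q)
    (hgcd : Int.gcd p q = 1) (hbig : 2 ≤ p.natAbs ∨ 2 ≤ q.natAbs)
    (hd : -l ≤ d) (he : -l ≤ e) (hl : 1 ≤ l)
    (h1 : p * l + q * d < l) (h2 : p * e + q * l < l) : False := by
  have hd' : q * (-l) ≤ q * d := mul_le_mul_of_nonneg_left hd (by linarith)
  have he' : p * (-l) ≤ p * e := mul_le_mul_of_nonneg_left he (by linarith)
  have hpq : p ≤ q := by nlinarith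
  have hqp : q ≤ p := by nlinarith
  have hpq' : p = q := le_antisymm hpq hqp
  subst hpq'
  rw [Int.gcd_self] at hgcd
  omega

lemma core_s5 (p q l W d e : ℤ) (hp : p ≠ 0) (hq : q ≠ 0)
    (hgcd : Int.gcd p q = 1) (hbig : 2 ≤ p.natAbs ∨ 2 ≤ q.natAbs)
    (hd : |d| ≤ l) (he : |e| ≤ l)
    (h1 : |p * l + q * d| ≤ W) (h2 : |p * e + q * l| ≤ W) : l ≤ W := by
  by_contra hc
  push_neg at hc
  have hW : 0 ≤ W := le_trans (abs_nonneg _) h1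
  have hl : 1 ≤ l := by linarith
  rw [abs_le] at hd he h1 h2
  rcases lt_or_gt_of_ne hp with hp' | hp' <;> rcases lt_or_gt_of_ne hq with hq' | hq'
  · exact core_pos (-p) (-q) l W d e (by omega) (by omega)
      (by simpa [Int.gcd, Int.natAbs_neg] using hgcd) (by omega)
      hd.1 he.1 hl (by linarith [h1.1]) (by linarith [h2.1])
  · exact core_pos (-p) q l W (-d) (-e) (by omega) (by omega)
      (by simpa [Int.gcd, Int.natAbs_neg] using hgcd) (by omega)
      (by linarith [hd.2]) (by linarith [he.2]) hl
      (by nlinarith [h1.1]) (by nlinarith [h2.2])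
  · exact core_pos p (-q) l W (-d) (-e) (by omega) (by omega)
      (by simpa [Int.gcd, Int.natAbs_neg] using hgcd) (by omega)
      (by linarith [hd.2]) (by linarith [he.2]) hl
      (by nlinarith [h1.2]) (by nlinarith [h2.1])
  · exact core_pos p q l W d e (by omega) (by omega) hgcd (by omega)
      hd.1 he.1 hl (by linarith [h1.2]) (by linarith [h2.2])

lemma natAbs_two_le {x : ℤ} (h0 : x ≠ 0) (h1 : ¬(x = 1 ∨ x = -1)) : 2 ≤ x.natAbs := by
  omega

lemma int_pm_one {x : ℤ} (h : x.natAbs = 1) : x = 1 ∨ x = -1 := by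
  omega


/-- If `Δ_P(x) = Δ_P(y) = l` then `w(P) = min(l, Δ_P(x+y), Δ_P(x−y))`. -/
theorem latticeWidth_eq_of_touch (V : Finset (Fin 2 → ℤ)) (hV : V.Nonempty)
    (P : Set (Fin 2 → ℝ)) (hP : P = latticePoly2 V) (l : ℤ)
    (hx : width2 P ![1, 0] = (l : ℝ)) (hy : width2 P ![0, 1] = (l : ℝ)) :
    IsLeast (widthSet2 P) (min (l : ℝ) (min (width2 P ![1, 1]) (width2 P ![1, -1]))) := by
  subst hP
  have e10 : width2 (latticePoly2 V) ![1, 0]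
      = ((V.sup' hV (fun v => v 0) - V.inf' hV (fun v => v 0) : ℤ) : ℝ) := by
    have hf : (fun v : Fin 2 → ℤ => ∑ i, (![1,0] : Fin 2 → ℤ) i * v i) = fun v => v 0 := by
      funext v; simp [Fin.sum_univ_two]
    rw [width2_eq_s5 V hV, hf]; push_cast; ring
  have e01 : width2 (latticePoly2 V) ![0, 1]
      = ((V.sup' hV (fun v => v 1) - V.inf' hV (fun v => v 1) : ℤ) : ℝ) := by
    have hf : (fun v : Fin 2 → ℤ => ∑ i, (![0,1] : Fin 2 → ℤ) i * v i) = fun v => v 1 := by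
      funext v; simp [Fin.sum_univ_two]
    rw [width2_eq_s5 V hV, hf]; push_cast; ring
  have e11 : width2 (latticePoly2 V) ![1, 1]
      = ((V.sup' hV (fun v => v 0 + v 1) - V.inf' hV (fun v => v 0 + v 1) : ℤ) : ℝ) := by
    have hf : (fun v : Fin 2 → ℤ => ∑ i, (![1,1] : Fin 2 → ℤ) i * v i) = fun v => v 0 + v 1 := by
      funext v; simp [Fin.sum_univ_two]
    rw [width2_eq_s5 V hV, hf]; push_cast; ring
  have e1m1 : width2 (latticePoly2 V) ![1, -1]
      = ((V.sup' hV (fun v => v 0 - v 1) - V.inf' hV (fun v => v 0 - v 1) : ℤ) : ℝ) := by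
    have hf : (fun v : Fin 2 → ℤ => ∑ i, (![1,-1] : Fin 2 → ℤ) i * v i) = fun v => v 0 - v 1 := by
      funext v; simp [Fin.sum_univ_two, sub_eq_add_neg]
    rw [width2_eq_s5 V hV, hf]; push_cast; ring
  have hxz : V.sup' hV (fun v => v 0) - V.inf' hV (fun v => v 0) = l := by
    have h := hx; rw [e10] at h; exact_mod_cast h
  have hyz : V.sup' hV (fun v => v 1) - V.inf' hV (fun v => v 1) = l := by
    have h := hy; rw [e01] at h; exact_mod_cast h
  constructor
  · rcases le_total (l : ℝ) (min (width2 (latticePoly2 V) ![1, 1])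
        (width2 (latticePoly2 V) ![1, -1])) with h | h
    · exact ⟨![1, 0], by decide, by rw [hx, min_eq_left h]⟩
    · rcases le_total (width2 (latticePoly2 V) ![1, 1])
          (width2 (latticePoly2 V) ![1, -1]) with h' | h'
      · exact ⟨![1, 1], by decide, by rw [min_eq_right h, min_eq_left h']⟩
      · exact ⟨![1, -1], by decide, by rw [min_eq_right h, min_eq_right h']⟩
  · rintro w ⟨a, hgcd, rfl⟩
    rw [width2_eq_s5 V hV a, e11, e1m1]
    set G : (Fin 2 → ℤ) → ℤ := fun v => ∑ i, a i * v i with hG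
    have hGv : ∀ v : Fin 2 → ℤ, G v = a 0 * v 0 + a 1 * v 1 := by
      intro v; simp [hG, Fin.sum_univ_two]
    have key : ∀ u ∈ V, ∀ v ∈ V, G u - G v ≤ V.sup' hV G - V.inf' hV G := by
      intro u hu v hv
      exact sub_le_sub (Finset.le_sup' G hu) (Finset.inf'_le G hv)
    obtain ⟨vR, hvR, hvRe⟩ := Finset.exists_mem_eq_sup' hV (fun v : Fin 2 → ℤ => v 0)
    obtain ⟨vL, hvL, hvLe⟩ := Finset.exists_mem_eq_inf' hV (fun v : Fin 2 → ℤ => v 0)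
    obtain ⟨vT, hvT, hvTe⟩ := Finset.exists_mem_eq_sup' hV (fun v : Fin 2 → ℤ => v 1)
    obtain ⟨vB, hvB, hvBe⟩ := Finset.exists_mem_eq_inf' hV (fun v : Fin 2 → ℤ => v 1)
    obtain ⟨uM, huM, huMe⟩ := Finset.exists_mem_eq_sup' hV (fun v : Fin 2 → ℤ => v 0 + v 1)
    obtain ⟨um, hum, hume⟩ := Finset.exists_mem_eq_inf' hV (fun v : Fin 2 → ℤ => v 0 + v 1)
    obtain ⟨wM, hwM, hwMe⟩ := Finset.exists_mem_eq_sup' hV (fun v : Fin 2 → ℤ => v 0 - v 1)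
    obtain ⟨wm, hwm, hwme⟩ := Finset.exists_mem_eq_inf' hV (fun v : Fin 2 → ℤ => v 0 - v 1)
    have bnd0 : ∀ v ∈ V, vL 0 ≤ v 0 ∧ v 0 ≤ vR 0 := by
      intro v hv
      exact ⟨hvLe ▸ Finset.inf'_le _ hv, hvRe ▸ Finset.le_sup' (fun v : Fin 2 → ℤ => v 0) hv⟩
    have bnd1 : ∀ v ∈ V, vB 1 ≤ v 1 ∧ v 1 ≤ vT 1 := by
      intro v hv
      exact ⟨hvBe ▸ Finset.inf'_le _ hv, hvTe ▸ Finset.le_sup' (fun v : Fin 2 → ℤ => v 1) hv⟩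
    have hlx : vR 0 - vL 0 = l := by rw [← hvRe, ← hvLe]; exact hxz
    have hly : vT 1 - vB 1 = l := by rw [← hvTe, ← hvBe]; exact hyz
    suffices hZ : min l (min
        (V.sup' hV (fun v => v 0 + v 1) - V.inf' hV (fun v => v 0 + v 1))
        (V.sup' hV (fun v => v 0 - v 1) - V.inf' hV (fun v => v 0 - v 1)))
        ≤ V.sup' hV G - V.inf' hV G by
      exact_mod_cast hZ
    have hlx' : vR 0 = vL 0 + l := by linarith [hxz, hvRe.symm, hvLe.symm,
      hvRe ▸ hxz, hvLe ▸ hvRe ▸ hxz]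
    have hly' : vT 1 = vB 1 + l := by linarith [hvTe ▸ hvBe ▸ hyz]
    have coreApp : 2 ≤ (a 0).natAbs ∨ 2 ≤ (a 1).natAbs → a 0 ≠ 0 → a 1 ≠ 0 →
        l ≤ V.sup' hV G - V.inf' hV G := by
      intro hbig hp0 hq0
      apply core_s5 (a 0) (a 1) l _ (vR 1 - vL 1) (vT 0 - vB 0) hp0 hq0 hgcd hbig
      · have h1 := bnd1 vR hvR; have h2 := bnd1 vL hvL
        rw [abs_le]; constructor <;> linarith [h1.1, h1.2, h2.1, h2.2, hly']
      · have h1 := bnd0 vT hvT; have h2 := bnd0 vB hvB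
        rw [abs_le]; constructor <;> linarith [h1.1, h1.2, h2.1, h2.2, hlx']
      · rw [abs_le]
        have hA := key vL hvL vR hvR
        have hB := key vR hvR vL hvL
        rw [hGv, hGv] at hA hB
        rw [hlx'] at hA hB
        constructor
        · nlinarith [hA]
        · nlinarith [hB]
      · rw [abs_le]
        have hA := key vB hvB vT hvT
        have hB := key vT hvT vB hvB
        rw [hGv, hGv] at hA hB
        rw [hly'] at hA hB
        constructor
        · nlinarith [hA]
        · nlinarith [hB]
    by_cases hq0 : a 1 = 0
    · have hp1 : a 0 = 1 ∨ a 0 = -1 := by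
        rw [hq0, Int.gcd_zero_right] at hgcd; exact int_pm_one hgcd
      refine le_trans (min_le_left _ _) ?_
      rcases hp1 with hp1 | hp1
      · have h := key vR hvR vL hvL
        rw [hGv, hGv, hp1, hq0] at h; linarith [h, hlx']
      · have h := key vL hvL vR hvR
        rw [hGv, hGv, hp1, hq0] at h; linarith [h, hlx']
    · by_cases hp0 : a 0 = 0
      · have hq1 : a 1 = 1 ∨ a 1 = -1 := by
          rw [hp0, Int.gcd_zero_left] at hgcd; exact int_pm_one hgcd
        refine le_trans (min_le_left _ _) ?_
        rcases hq1 with hq1 | hq1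
        · have h := key vT hvT vB hvB
          rw [hGv, hGv, hq1, hp0] at h; linarith [h, hly']
        · have h := key vB hvB vT hvT
          rw [hGv, hGv, hq1, hp0] at h; linarith [h, hly']
      · by_cases hone : a 0 = 1 ∨ a 0 = -1
        · by_cases honeq : a 1 = 1 ∨ a 1 = -1
          · rcases hone with hp1 | hp1 <;> rcases honeq with hq1 | hq1
            · refine le_trans (le_trans (min_le_right _ _) (min_le_left _ _)) ?_
              have h := key uM huM um hum
              rw [hGv, hGv, hp1, hq1] at h
              rw [huMe, hume]; linarith [h]
            · refine le_trans (le_trans (min_le_right _ _) (min_le_right _ _)) ?_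
              have h := key wM hwM wm hwm
              rw [hGv, hGv, hp1, hq1] at h
              rw [hwMe, hwme]; linarith [h]
            · refine le_trans (le_trans (min_le_right _ _) (min_le_right _ _)) ?_
              have h := key wm hwm wM hwM
              rw [hGv, hGv, hp1, hq1] at h
              rw [hwMe, hwme]; linarith [h]
            · refine le_trans (le_trans (min_le_right _ _) (min_le_left _ _)) ?_
              have h := key um hum uM huM
              rw [hGv, hGv, hp1, hq1] at h
              rw [huMe, hume]; linarith [h]
          · exact le_trans (min_le_left _ _)
              (coreApp (Or.inr (natAbs_two_le hq0 honeq)) hp0 hq0)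
        · exact le_trans (min_le_left _ _)
            (coreApp (Or.inl (natAbs_two_le hp0 hone)) hp0 hq0)
end

section
/- Let P ⊂ ℝ² be a lattice polygon. Then: (1) there exists an affine unimodular transformation T of ℝ² such that T(P) ⊆ [0, w(P)] × [0, ls_□(P)]; and (2) for any integers a ≤ b such that T(P) ⊆ [0,a] × [0,b] for some affine unimodular transformation T, one has w(P) ≤ a and ls_□(P) ≤ b. -/
set_option maxHeartbeats 1000000


namespace LatAux

def dz (a v : Fin 2 → ℤ) : ℤ := a 0 * v 0 + a 1 * v 1

noncomputable def fr (c : Fin 2 → ℝ) (v : Fin 2 → ℤ) : ℝ := c 0 * (v 0 : ℝ) + c 1 * (v 1 : ℝ)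

variable (V : Finset (Fin 2 → ℤ)) (hV : V.Nonempty)

noncomputable def FS (c : Fin 2 → ℝ) : ℝ := V.sup' hV (fr c)
noncomputable def FI (c : Fin 2 → ℝ) : ℝ := V.inf' hV (fr c)
noncomputable def Fw (c : Fin 2 → ℝ) : ℝ := FS V hV c - FI V hV c

def IS (a : Fin 2 → ℤ) : ℤ := V.sup' hV (dz a)
def II (a : Fin 2 → ℤ) : ℤ := V.inf' hV (dz a)
def IW (a : Fin 2 → ℤ) : ℤ := IS V hV a - II V hV a

lemma fr_cast (a : Fin 2 → ℤ) (v : Fin 2 → ℤ) :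
    fr (fun i => (a i : ℝ)) v = ((dz a v : ℤ) : ℝ) := by
  simp [fr, dz]

lemma IS_cast (a : Fin 2 → ℤ) : ((IS V hV a : ℤ) : ℝ) = FS V hV (fun i => (a i : ℝ)) := by
  unfold IS FS
  rw [Finset.comp_sup'_eq_sup'_comp hV (f := dz a) (fun z : ℤ => (z : ℝ))
    (fun x y => by simp [Int.cast_max])]
  exact Finset.sup'_congr hV rfl (fun v _ => (fr_cast a v).symm)

lemma II_cast (a : Fin 2 → ℤ) : ((II V hV a : ℤ) : ℝ) = FI V hV (fun i => (a i : ℝ)) := by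
  unfold II FI
  rw [Finset.apply_inf'_eq_inf'_comp hV (f := dz a) (fun z : ℤ => (z : ℝ))
    (fun x y => by simp [Int.cast_min])]
  exact Finset.inf'_congr hV rfl (fun v _ => (fr_cast a v).symm)

lemma IW_cast (a : Fin 2 → ℤ) : ((IW V hV a : ℤ) : ℝ) = Fw V hV (fun i => (a i : ℝ)) := by
  unfold IW Fw; push_cast [IS_cast V hV a, II_cast V hV a]; ring

lemma hull_bound (c : Fin 2 → ℝ) {p : Fin 2 → ℝ} (hp : p ∈ latticePoly2 V) :
    c 0 * p 0 + c 1 * p 1 ∈ Set.Icc (FI V hV c) (FS V hV c) := by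
  have key : latticePoly2 V ⊆ {q : Fin 2 → ℝ |
      c 0 * q 0 + c 1 * q 1 ∈ Set.Icc (FI V hV c) (FS V hV c)} := by
    apply convexHull_min
    · rintro q ⟨v, hv, rfl⟩
      have h1 : FI V hV c ≤ fr c v := Finset.inf'_le _ hv
      have h2 : fr c v ≤ FS V hV c := Finset.le_sup' _ hv
      exact ⟨h1, h2⟩
    · intro x hx y hy α β hα hβ hαβ
      simp only [Set.mem_setOf_eq, Set.mem_Icc, Pi.add_apply, Pi.smul_apply,
        smul_eq_mul] at hx hy ⊢
      have k1 := mul_le_mul_of_nonneg_left hx.1 hα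
      have k2 := mul_le_mul_of_nonneg_left hx.2 hα
      have k3 := mul_le_mul_of_nonneg_left hy.1 hβ
      have k4 := mul_le_mul_of_nonneg_left hy.2 hβ
      have e1 : α * FI V hV c + β * FI V hV c = FI V hV c := by
        rw [← add_mul, hαβ, one_mul]
      have e2 : α * FS V hV c + β * FS V hV c = FS V hV c := by
        rw [← add_mul, hαβ, one_mul]
      constructor <;> nlinarith [k1, k2, k3, k4, e1, e2]
  exact key hp

lemma mem_poly (v : Fin 2 → ℤ) (hv : v ∈ V) :
    (fun i => ((v i : ℤ) : ℝ)) ∈ latticePoly2 V :=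
  subset_convexHull ℝ _ ⟨v, hv, rfl⟩

lemma width2_eq (a : Fin 2 → ℤ) :
    width2 (latticePoly2 V) a = ((IW V hV a : ℤ) : ℝ) := by
  set c : Fin 2 → ℝ := fun i => (a i : ℝ) with hc
  have hsum : ∀ p : Fin 2 → ℝ, (∑ i, (a i : ℝ) * p i) = c 0 * p 0 + c 1 * p 1 := by
    intro p; rw [Fin.sum_univ_two]
  have hgr : IsGreatest ((fun p => ∑ i, (a i : ℝ) * p i) '' latticePoly2 V) (FS V hV c) := by
    constructor
    · obtain ⟨v, hv, hveq⟩ := Finset.exists_mem_eq_sup' hV (fr c)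
      refine ⟨_, mem_poly V v hv, ?_⟩
      show (∑ i : Fin 2, (a i : ℝ) * ((v i : ℤ) : ℝ)) = FS V hV c
      rw [Fin.sum_univ_two]; exact hveq.symm
    · rintro x ⟨p, hp, rfl⟩
      simpa [Fin.sum_univ_two] using (hull_bound V hV c hp).2
  have hls : IsLeast ((fun p => ∑ i, (a i : ℝ) * p i) '' latticePoly2 V) (FI V hV c) := by
    constructor
    · obtain ⟨v, hv, hveq⟩ := Finset.exists_mem_eq_inf' hV (fr c)
      refine ⟨_, mem_poly V v hv, ?_⟩
      show (∑ i : Fin 2, (a i : ℝ) * ((v i : ℤ) : ℝ)) = FI V hV c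
      rw [Fin.sum_univ_two]; exact hveq.symm
    · rintro x ⟨p, hp, rfl⟩
      simpa [Fin.sum_univ_two] using (hull_bound V hV c hp).1
  simp only [width2]
  rw [hgr.csSup_eq, hls.csInf_eq, IW_cast V hV a]; rfl



lemma affApply (A : Matrix (Fin 2) (Fin 2) ℤ) (t : Fin 2 → ℤ) (p : Fin 2 → ℝ) (i : Fin 2) :
    ((A.map (fun z : ℤ => (z : ℝ))).mulVec p + fun j => (t j : ℝ)) i
      = (A i 0 : ℝ) * p 0 + (A i 1 : ℝ) * p 1 + (t i : ℝ) := by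
  simp [Matrix.mulVec, dotProduct, Fin.sum_univ_two, Matrix.map_apply]
  fin_cases i <;> rfl

lemma fits_of_rows (a b : Fin 2 → ℤ)
    (hdet : a 0 * b 1 - a 1 * b 0 = 1 ∨ a 0 * b 1 - a 1 * b 0 = -1)
    (wa lb : ℤ) (ha : IW V hV a ≤ wa) (hb : IW V hV b ≤ lb) :
    FitsInRect (latticePoly2 V) wa lb := by
  refine ⟨!![a 0, a 1; b 0, b 1], ![-(II V hV a), -(II V hV b)], ?_, ?_⟩
  · rw [Matrix.det_fin_two_of]; exact hdet
  · intro p hp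
    have h0 := hull_bound V hV (fun i => (a i : ℝ)) hp
    have h1 := hull_bound V hV (fun i => (b i : ℝ)) hp
    have ca0 : ((II V hV a : ℤ) : ℝ) ≤ (a 0 : ℝ) * p 0 + (a 1 : ℝ) * p 1 := by
      rw [II_cast]; exact h0.1
    have ca1 : (a 0 : ℝ) * p 0 + (a 1 : ℝ) * p 1 ≤ ((IS V hV a : ℤ) : ℝ) := by
      rw [IS_cast]; exact h0.2
    have cb0 : ((II V hV b : ℤ) : ℝ) ≤ (b 0 : ℝ) * p 0 + (b 1 : ℝ) * p 1 := by
      rw [II_cast]; exact h1.1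
    have cb1 : (b 0 : ℝ) * p 0 + (b 1 : ℝ) * p 1 ≤ ((IS V hV b : ℤ) : ℝ) := by
      rw [IS_cast]; exact h1.2
    have hwa : ((IS V hV a : ℤ) : ℝ) - ((II V hV a : ℤ) : ℝ) ≤ (wa : ℝ) := by
      have : ((IW V hV a : ℤ) : ℝ) ≤ (wa : ℝ) := by exact_mod_cast ha
      unfold IW at this; push_cast at this; linarith
    have hlb : ((IS V hV b : ℤ) : ℝ) - ((II V hV b : ℤ) : ℝ) ≤ (lb : ℝ) := by
      have : ((IW V hV b : ℤ) : ℝ) ≤ (lb : ℝ) := by exact_mod_cast hb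
      unfold IW at this; push_cast at this; linarith
    constructor
    · rw [affApply]
      simp only [Matrix.of_apply, Matrix.cons_val', Matrix.cons_val_zero, Matrix.cons_val_one,
        Matrix.head_cons, Matrix.empty_val', Matrix.cons_val_fin_one, Matrix.head_fin_const]
      constructor
      · push_cast; linarith
      · push_cast; linarith
    · rw [affApply]
      simp only [Matrix.of_apply, Matrix.cons_val', Matrix.cons_val_zero, Matrix.cons_val_one,
        Matrix.head_cons, Matrix.empty_val', Matrix.cons_val_fin_one, Matrix.head_fin_const]
      constructor
      · push_cast; linarith
      · push_cast; linarith

lemma row_bound (A : Matrix (Fin 2) (Fin 2) ℤ) (t : Fin 2 → ℤ) (i : Fin 2) (m : ℤ)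
    (h : ∀ p ∈ latticePoly2 V,
      ((A.map (fun z : ℤ => (z : ℝ))).mulVec p + fun j => (t j : ℝ)) i ∈
        Set.Icc (0 : ℝ) (m : ℝ)) :
    IW V hV (A i) ≤ m := by
  obtain ⟨vmax, hvmax, hmax⟩ := Finset.exists_mem_eq_sup' hV (dz (A i))
  obtain ⟨vmin, hvmin, hmin⟩ := Finset.exists_mem_eq_inf' hV (dz (A i))
  have h1 := h _ (mem_poly V vmax hvmax)
  have h2 := h _ (mem_poly V vmin hvmin)
  rw [affApply] at h1 h2
  have e1 : (A i 0 : ℝ) * ((vmax 0 : ℤ) : ℝ) + (A i 1 : ℝ) * ((vmax 1 : ℤ) : ℝ) + (t i : ℝ)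
      = ((dz (A i) vmax + t i : ℤ) : ℝ) := by push_cast [dz]; ring
  have e2 : (A i 0 : ℝ) * ((vmin 0 : ℤ) : ℝ) + (A i 1 : ℝ) * ((vmin 1 : ℤ) : ℝ) + (t i : ℝ)
      = ((dz (A i) vmin + t i : ℤ) : ℝ) := by push_cast [dz]; ring
  rw [e1] at h1; rw [e2] at h2
  have k1 : dz (A i) vmax + t i ≤ m := by exact_mod_cast h1.2
  have k2 : (0 : ℤ) ≤ dz (A i) vmin + t i := by exact_mod_cast h2.1
  unfold IW IS II
  rw [← hmax, ← hmin] at *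
  omega

lemma sup'_neg (f : (Fin 2 → ℤ) → ℝ) :
    V.sup' hV (fun v => - f v) = - V.inf' hV f := by
  apply le_antisymm
  · exact Finset.sup'_le hV _ (fun v hv => neg_le_neg (Finset.inf'_le f hv))
  · rw [neg_le]
    exact Finset.le_inf' hV _ (fun v hv => by
      have := Finset.le_sup' (fun v => - f v) hv; linarith)

lemma Fw_nonneg (c : Fin 2 → ℝ) : 0 ≤ Fw V hV c := by
  have hne := hV
  obtain ⟨v, hv⟩ := hne
  have h1 : FI V hV c ≤ fr c v := Finset.inf'_le _ hv
  have h2 : fr c v ≤ FS V hV c := Finset.le_sup' _ hv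
  unfold Fw; linarith

lemma Fw_neg (c : Fin 2 → ℝ) : Fw V hV (-c) = Fw V hV c := by
  have hfr : ∀ v, fr (-c) v = - fr c v := by
    intro v; simp [fr]; ring
  have hFS : FS V hV (-c) = - FI V hV c := by
    unfold FS
    rw [Finset.sup'_congr hV rfl (fun v _ => hfr v)]
    exact sup'_neg V hV (fr c)
  have hFI : FI V hV (-c) = - FS V hV c := by
    unfold FI
    rw [Finset.inf'_congr hV rfl (fun v _ => hfr v)]
    have := sup'_neg V hV (fun v => - fr c v)
    have h2 : V.inf' hV (fun v => - fr c v) = - V.sup' hV (fr c) := by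
      have := sup'_neg V hV (fun v => - fr c v)
      simp only [neg_neg] at this
      linarith [this]
    exact h2
  unfold Fw; rw [hFS, hFI]; ring

lemma Fw_add_le (c d : Fin 2 → ℝ) : Fw V hV (c + d) ≤ Fw V hV c + Fw V hV d := by
  have hfr : ∀ v, fr (c + d) v = fr c v + fr d v := by
    intro v; simp [fr]; ring
  have hFS : FS V hV (c + d) ≤ FS V hV c + FS V hV d := by
    unfold FS
    apply Finset.sup'_le
    intro v hv
    rw [hfr v]
    exact add_le_add (Finset.le_sup' _ hv) (Finset.le_sup' _ hv)
  have hFI : FI V hV c + FI V hV d ≤ FI V hV (c + d) := by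
    unfold FI
    apply Finset.le_inf'
    intro v hv
    rw [hfr v]
    exact add_le_add (Finset.inf'_le _ hv) (Finset.inf'_le _ hv)
  unfold Fw; linarith

lemma Fw_smul (t : ℝ) (c : Fin 2 → ℝ) : Fw V hV (t • c) = |t| * Fw V hV c := by
  have hfr : ∀ s : ℝ, ∀ v, fr (s • c) v = s * fr c v := by
    intro s v; simp [fr]; ring
  have main : ∀ s : ℝ, 0 ≤ s → Fw V hV (s • c) = s * Fw V hV c := by
    intro s hs
    have hFS : FS V hV (s • c) = s * FS V hV c := by
      unfold FS
      rw [Finset.sup'_congr hV rfl (fun v _ => hfr s v)]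
      rw [Finset.comp_sup'_eq_sup'_comp hV (f := fr c) (fun x => s * x)
        (fun x y => by exact mul_max_of_nonneg x y hs)]
      rfl
    have hFI : FI V hV (s • c) = s * FI V hV c := by
      unfold FI
      rw [Finset.inf'_congr hV rfl (fun v _ => hfr s v)]
      rw [Finset.apply_inf'_eq_inf'_comp hV (f := fr c) (fun x => s * x)
        (fun x y => by exact mul_min_of_nonneg x y hs)]
      rfl
    unfold Fw; rw [hFS, hFI]; ring
  rcases le_or_gt 0 t with ht | ht
  · rw [main t ht, abs_of_nonneg ht]
  · have h1 : t • c = -((-t) • c) := by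
      funext i; simp
    rw [h1, Fw_neg, main (-t) (by linarith), abs_of_neg ht]

lemma Fw_comb (x y z : Fin 2 → ℝ) (s t r : ℝ) :
    Fw V hV (s • x + (t • y + r • z)) ≤
      |s| * Fw V hV x + (|t| * Fw V hV y + |r| * Fw V hV z) := by
  calc Fw V hV (s • x + (t • y + r • z))
      ≤ Fw V hV (s • x) + Fw V hV (t • y + r • z) := Fw_add_le V hV _ _
    _ ≤ Fw V hV (s • x) + (Fw V hV (t • y) + Fw V hV (r • z)) := by
        linarith [Fw_add_le V hV (t • y) (r • z)]
    _ = |s| * Fw V hV x + (|t| * Fw V hV y + |r| * Fw V hV z) := by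
        rw [Fw_smul, Fw_smul, Fw_smul]

lemma IW_neg (a : Fin 2 → ℤ) : IW V hV (fun i => -(a i)) = IW V hV a := by
  have h : ((IW V hV (fun i => -(a i)) : ℤ) : ℝ) = ((IW V hV a : ℤ) : ℝ) := by
    rw [IW_cast, IW_cast]
    have : (fun i => ((-(a i) : ℤ) : ℝ)) = -(fun i => ((a i : ℤ) : ℝ)) := by
      funext i; simp
    rw [this, Fw_neg]
  exact_mod_cast h

lemma core (a g1 g2 b0 : Fin 2 → ℤ) (m n : ℤ) (hm : 2 ≤ m) (hn : 2 ≤ n)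
    (hsum : ∀ i, a i = m * g1 i + n * g2 i)
    (hb0 : a 0 * b0 1 - a 1 * b0 0 = 1)
    (hg : g1 0 * g2 1 - g1 1 * g2 0 = 1 ∨ g1 0 * g2 1 - g1 1 * g2 0 = -1)
    (M : ℤ) (hFa : IW V hV a ≤ M) (h1 : IW V hV g1 ≤ M) (h2 : IW V hV g2 ≤ M) :
    ∃ b : Fin 2 → ℤ, (a 0 * b 1 - a 1 * b 0 = 1 ∨ a 0 * b 1 - a 1 * b 0 = -1)
      ∧ IW V hV b ≤ M := by
  obtain ⟨ε, hεdef⟩ : ∃ e : ℤ, e = g1 0 * g2 1 - g1 1 * g2 0 := ⟨_, rfl⟩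
  rw [← hεdef] at hg
  obtain ⟨b0', hb0'def⟩ : ∃ f : Fin 2 → ℤ, f = fun i => ε * b0 i := ⟨_, rfl⟩
  have hdet_ab0' : a 0 * b0' 1 - a 1 * b0' 0 = ε := by
    simp only [hb0'def]; linear_combination ε * hb0
  have hag1 : a 0 * g1 1 - a 1 * g1 0 = -(n * ε) := by
    rw [hεdef]; linear_combination g1 1 * hsum 0 - g1 0 * hsum 1
  have hmR : (2:ℝ) ≤ (m:ℝ) := by exact_mod_cast hm
  have hnR : (2:ℝ) ≤ (n:ℝ) := by exact_mod_cast hn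
  have hm0 : (0:ℝ) < (m:ℝ) := by linarith
  have hn0 : (0:ℝ) < (n:ℝ) := by linarith
  have hnne : (n:ℝ) ≠ 0 := hn0.ne'
  have hmne : (m:ℝ) ≠ 0 := hm0.ne'
  have hQ : (0:ℝ) < (a 0:ℝ)^2 + (a 1:ℝ)^2 := by
    have hne : a 0 ≠ 0 ∨ a 1 ≠ 0 := by
      by_contra hc; push_neg at hc
      rw [hc.1, hc.2] at hb0; simp at hb0
    rcases hne with h | h
    · have h' : (a 0:ℝ) ≠ 0 := by exact_mod_cast h
      have h2' : (0:ℝ) < (a 0:ℝ)^2 := by positivity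
      linarith [sq_nonneg (a 1:ℝ)]
    · have h' : (a 1:ℝ) ≠ 0 := by exact_mod_cast h
      have h2' : (0:ℝ) < (a 1:ℝ)^2 := by positivity
      linarith [sq_nonneg (a 0:ℝ)]
  obtain ⟨c4, hc4def⟩ : ∃ f : Fin 2 → ℝ,
      f = fun i => -(1/(n:ℝ)) * (g1 i : ℝ) - (1 - 1/(n:ℝ)) * (a i : ℝ) := ⟨_, rfl⟩
  obtain ⟨τ, hτdef⟩ : ∃ t : ℝ,
      t = ((c4 0 - (b0' 0 : ℝ)) * (a 0:ℝ) + (c4 1 - (b0' 1:ℝ)) * (a 1:ℝ))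
        / ((a 0:ℝ)^2 + (a 1:ℝ)^2) := ⟨_, rfl⟩
  have hag1R : (a 0:ℝ) * (g1 1:ℝ) - (a 1:ℝ) * (g1 0:ℝ) = -((n:ℝ) * (ε:ℝ)) := by
    exact_mod_cast hag1
  have hab0R : (a 0:ℝ) * (b0' 1:ℝ) - (a 1:ℝ) * (b0' 0:ℝ) = (ε:ℝ) := by
    exact_mod_cast hdet_ab0'
  have hc4n : ∀ i, (n:ℝ) * c4 i = -((g1 i:ℝ)) - ((n:ℝ)-1) * (a i:ℝ) := by
    intro i; simp only [hc4def]; field_simp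
  have hperp : (a 0:ℝ) * (c4 1 - (b0' 1:ℝ)) - (a 1:ℝ) * (c4 0 - (b0' 0:ℝ)) = 0 := by
    apply mul_left_cancel₀ hnne
    rw [mul_zero]
    linear_combination (a 0:ℝ) * hc4n 1 - (a 1:ℝ) * hc4n 0 - hag1R - (n:ℝ) * hab0R
  have hkey0 : (c4 0 - (b0' 0:ℝ)) * ((a 0:ℝ)^2 + (a 1:ℝ)^2)
      = ((c4 0 - (b0' 0:ℝ)) * (a 0:ℝ) + (c4 1 - (b0' 1:ℝ)) * (a 1:ℝ)) * (a 0:ℝ) := by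
    linear_combination (-(a 1:ℝ)) * hperp
  have hkey1 : (c4 1 - (b0' 1:ℝ)) * ((a 0:ℝ)^2 + (a 1:ℝ)^2)
      = ((c4 0 - (b0' 0:ℝ)) * (a 0:ℝ) + (c4 1 - (b0' 1:ℝ)) * (a 1:ℝ)) * (a 1:ℝ) := by
    linear_combination ((a 0:ℝ)) * hperp
  have hc4line : ∀ i, c4 i = (b0' i : ℝ) + τ * (a i : ℝ) := by
    rw [Fin.forall_fin_two]
    constructor
    · rw [hτdef]; field_simp; linear_combination hkey0
    · rw [hτdef]; field_simp; linear_combination hkey1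
  obtain ⟨L, hLdef⟩ : ∃ x : ℝ, x = 2 - 1/(m:ℝ) - 1/(n:ℝ) + 1/((m:ℝ)*(n:ℝ)) := ⟨_, rfl⟩
  have hLfact : L - 1 = (1 - 1/(m:ℝ)) * (1 - 1/(n:ℝ)) := by
    rw [hLdef]; field_simp; ring
  have hp1 : (0:ℝ) < 1 - 1/(m:ℝ) := by
    rw [sub_pos, div_lt_one hm0]; linarith
  have hp2 : (0:ℝ) < 1 - 1/(n:ℝ) := by
    rw [sub_pos, div_lt_one hn0]; linarith
  have hL1 : 1 < L := by linarith [hLfact, mul_pos hp1 hp2]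
  have hL0 : 0 < L := by linarith
  have hLmn : (m:ℝ)*(n:ℝ)*L = 2*(m:ℝ)*(n:ℝ) - (n:ℝ) - (m:ℝ) + 1 := by
    rw [hLdef]; field_simp
  obtain ⟨c1, hc1def⟩ : ∃ f : Fin 2 → ℝ,
      f = fun i => (1 - 1/(m:ℝ)) * (a i:ℝ) + (1/(m:ℝ)) * (g2 i:ℝ) := ⟨_, rfl⟩
  have hc1m : ∀ i, (m:ℝ) * c1 i = ((m:ℝ)-1) * (a i:ℝ) + (g2 i:ℝ) := by
    intro i; simp only [hc1def]; field_simp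
  have hdiff : ∀ i, c1 i - c4 i = L * (a i : ℝ) := by
    intro i
    have hsR : (a i:ℝ) = (m:ℝ)*(g1 i:ℝ) + (n:ℝ)*(g2 i:ℝ) := by exact_mod_cast hsum i
    apply mul_left_cancel₀ (mul_pos hm0 hn0).ne'
    linear_combination (n:ℝ) * hc1m i - (m:ℝ) * hc4n i - hsR - (a i:ℝ) * hLmn
  have hc1line : ∀ i, c1 i = (b0' i:ℝ) + (τ + L) * (a i:ℝ) := by
    intro i
    linear_combination hdiff i + hc4line i
  obtain ⟨k, hkdef⟩ : ∃ k : ℤ, k = ⌈τ⌉ := ⟨_, rfl⟩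
  obtain ⟨b, hbdef⟩ : ∃ f : Fin 2 → ℤ, f = fun i => b0' i + k * a i := ⟨_, rfl⟩
  have hk1 : τ ≤ (k:ℝ) := by rw [hkdef]; exact Int.le_ceil τ
  have hk2 : (k:ℝ) < τ + 1 := by rw [hkdef]; exact Int.ceil_lt_add_one τ
  obtain ⟨u, hudef⟩ : ∃ x : ℝ, x = ((k:ℝ) - τ) / L := ⟨_, rfl⟩
  have hu0 : 0 ≤ u := by rw [hudef]; exact div_nonneg (by linarith) hL0.le
  have hu1 : u ≤ 1 := by rw [hudef, div_le_one hL0]; linarith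
  have huL : u * L = (k:ℝ) - τ := by rw [hudef]; exact div_mul_cancel₀ _ hL0.ne'
  have hbR : ∀ i, ((b i : ℤ):ℝ) = (1 - u) * c4 i + u * c1 i := by
    intro i
    rw [hc4line i, hc1line i]
    simp only [hbdef]
    push_cast
    linear_combination (-((a i:ℝ))) * huL
  obtain ⟨sc, hsdef⟩ : ∃ x : ℝ, x = u * (1 - 1/(m:ℝ)) - (1 - u) * (1 - 1/(n:ℝ)) := ⟨_, rfl⟩
  obtain ⟨t1, ht1def⟩ : ∃ x : ℝ, x = -((1 - u)/(n:ℝ)) := ⟨_, rfl⟩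
  obtain ⟨t2, ht2def⟩ : ∃ x : ℝ, x = u/(m:ℝ) := ⟨_, rfl⟩
  have hrepr : (fun i => ((b i:ℤ):ℝ)) = sc • (fun i => ((a i:ℤ):ℝ))
      + (t1 • (fun i => ((g1 i:ℤ):ℝ)) + t2 • (fun i => ((g2 i:ℤ):ℝ))) := by
    funext i
    simp only [Pi.add_apply, Pi.smul_apply, smul_eq_mul]
    rw [hbR i]
    simp only [hc4def, hc1def, hsdef, ht1def, ht2def]
    field_simp
    ring
  have hcomb := Fw_comb V hV (fun i => ((a i:ℤ):ℝ)) (fun i => ((g1 i:ℤ):ℝ))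
    (fun i => ((g2 i:ℤ):ℝ)) sc t1 t2
  rw [← hrepr] at hcomb
  have hFaR : Fw V hV (fun i => ((a i:ℤ):ℝ)) ≤ (M:ℝ) := by
    rw [← IW_cast]; exact_mod_cast hFa
  have hF1R : Fw V hV (fun i => ((g1 i:ℤ):ℝ)) ≤ (M:ℝ) := by
    rw [← IW_cast]; exact_mod_cast h1
  have hF2R : Fw V hV (fun i => ((g2 i:ℤ):ℝ)) ≤ (M:ℝ) := by
    rw [← IW_cast]; exact_mod_cast h2
  have hM0 : (0:ℝ) ≤ (M:ℝ) := le_trans (Fw_nonneg V hV _) hFaR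
  have w1 : 0 ≤ u * (1 - 1/(m:ℝ)) := mul_nonneg hu0 hp1.le
  have w2 : 0 ≤ (1-u) * (1 - 1/(n:ℝ)) := mul_nonneg (by linarith) hp2.le
  have habs_s : |sc| ≤ u * (1 - 1/(m:ℝ)) + (1 - u) * (1 - 1/(n:ℝ)) := by
    rw [abs_le, hsdef]; constructor
    · linarith
    · linarith
  have habs_t1 : |t1| = (1-u)/(n:ℝ) := by
    rw [ht1def, abs_neg, abs_of_nonneg (div_nonneg (by linarith) hn0.le)]
  have habs_t2 : |t2| = u/(m:ℝ) := by
    rw [ht2def, abs_of_nonneg (div_nonneg hu0 hm0.le)]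
  have hsum1 : u * (1 - 1/(m:ℝ)) + (1 - u) * (1 - 1/(n:ℝ)) + (1-u)/(n:ℝ) + u/(m:ℝ) = 1 := by
    field_simp
    ring
  have habs_sum : |sc| + |t1| + |t2| ≤ 1 := by
    rw [habs_t1, habs_t2]; linarith
  have hfinal : Fw V hV (fun i => ((b i:ℤ):ℝ)) ≤ (M:ℝ) := by
    have q0 := Fw_nonneg V hV (fun i => ((a i:ℤ):ℝ))
    have m0 : |sc| * Fw V hV (fun i => ((a i:ℤ):ℝ)) ≤ |sc| * (M:ℝ) :=
      mul_le_mul_of_nonneg_left hFaR (abs_nonneg sc)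
    have m1 : |t1| * Fw V hV (fun i => ((g1 i:ℤ):ℝ)) ≤ |t1| * (M:ℝ) :=
      mul_le_mul_of_nonneg_left hF1R (abs_nonneg t1)
    have m2 : |t2| * Fw V hV (fun i => ((g2 i:ℤ):ℝ)) ≤ |t2| * (M:ℝ) :=
      mul_le_mul_of_nonneg_left hF2R (abs_nonneg t2)
    have hfin2 : (|sc| + |t1| + |t2|) * (M:ℝ) ≤ 1 * (M:ℝ) :=
      mul_le_mul_of_nonneg_right habs_sum hM0
    linarith [hcomb, m0, m1, m2, hfin2]
  have hIWb : IW V hV b ≤ M := by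
    have h' : ((IW V hV b : ℤ):ℝ) ≤ (M:ℝ) := by rw [IW_cast]; exact hfinal
    exact_mod_cast h'
  refine ⟨b, ?_, hIWb⟩
  have hdetb : a 0 * b 1 - a 1 * b 0 = ε := by
    simp only [hbdef]
    linear_combination hdet_ab0'
  rw [hdetb]
  exact hg

lemma exists_partner (a g1 g2 b0 : Fin 2 → ℤ)
    (hb0 : a 0 * b0 1 - a 1 * b0 0 = 1)
    (hgraw : g1 0 * g2 1 - g1 1 * g2 0 = 1 ∨ g1 0 * g2 1 - g1 1 * g2 0 = -1)
    (M : ℤ) (hFa : IW V hV a ≤ M) (h1 : IW V hV g1 ≤ M) (h2 : IW V hV g2 ≤ M) :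
    ∃ b : Fin 2 → ℤ, (a 0 * b 1 - a 1 * b 0 = 1 ∨ a 0 * b 1 - a 1 * b 0 = -1)
      ∧ IW V hV b ≤ M := by
  obtain ⟨ε, hεdef⟩ : ∃ e : ℤ, e = g1 0 * g2 1 - g1 1 * g2 0 := ⟨_, rfl⟩
  have hg : ε = 1 ∨ ε = -1 := by rw [hεdef]; exact hgraw
  have hε2 : ε * ε = 1 := by rcases hg with h | h <;> rw [h] <;> ring
  obtain ⟨m, hmdef⟩ : ∃ x : ℤ, x = ε * (a 0 * g2 1 - a 1 * g2 0) := ⟨_, rfl⟩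
  obtain ⟨n, hndef⟩ : ∃ x : ℤ, x = ε * (g1 0 * a 1 - g1 1 * a 0) := ⟨_, rfl⟩
  have hsum : ∀ i, a i = m * g1 i + n * g2 i := by
    rw [Fin.forall_fin_two]
    constructor
    · rw [hmdef, hndef]
      linear_combination (-(a 0)) * hε2 + (ε * (a 0)) * hεdef
    · rw [hmdef, hndef]
      linear_combination (-(a 1)) * hε2 + (ε * (a 1)) * hεdef
  by_cases hm1 : m = 1 ∨ m = -1
  · refine ⟨g2, ?_, h2⟩
    have hd : a 0 * g2 1 - a 1 * g2 0 = m * ε := by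
      rw [hmdef]
      linear_combination (-(a 0 * g2 1 - a 1 * g2 0)) * hε2
    rw [hd]
    rcases hm1 with h | h <;> rcases hg with h' | h' <;> rw [h, h'] <;> norm_num
  by_cases hn1 : n = 1 ∨ n = -1
  · refine ⟨g1, ?_, h1⟩
    have hd : a 0 * g1 1 - a 1 * g1 0 = -(n * ε) := by
      rw [hndef]
      linear_combination ((g1 0 * a 1 - g1 1 * a 0)) * hε2
    rw [hd]
    rcases hn1 with h | h <;> rcases hg with h' | h' <;> rw [h, h'] <;> norm_num
  have hmne0 : m ≠ 0 := by
    intro h0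
    have e0 := hsum 0; have e1 := hsum 1
    rw [h0] at e0 e1
    simp only [zero_mul, zero_add] at e0 e1
    have hu : n * (g2 0 * b0 1 - g2 1 * b0 0) = 1 := by
      linear_combination hb0 - (b0 1) * e0 + (b0 0) * e1
    have : n = 1 ∨ n = -1 := Int.isUnit_iff.mp (IsUnit.of_mul_eq_one _ hu)
    exact hn1 this
  have hnne0 : n ≠ 0 := by
    intro h0
    have e0 := hsum 0; have e1 := hsum 1
    rw [h0] at e0 e1
    simp only [zero_mul, add_zero] at e0 e1
    have hu : m * (g1 0 * b0 1 - g1 1 * b0 0) = 1 := by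
      linear_combination hb0 - (b0 1) * e0 + (b0 0) * e1
    have : m = 1 ∨ m = -1 := Int.isUnit_iff.mp (IsUnit.of_mul_eq_one _ hu)
    exact hm1 this
  push_neg at hm1 hn1
  have hm2 : 2 ≤ m ∨ m ≤ -2 := by omega
  have hn2 : 2 ≤ n ∨ n ≤ -2 := by omega
  rcases hm2 with hm2 | hm2 <;> rcases hn2 with hn2 | hn2
  · exact core V hV a g1 g2 b0 m n hm2 hn2 hsum hb0 hgraw M hFa h1 h2
  · obtain ⟨G2, hG2def⟩ : ∃ f : Fin 2 → ℤ, f = fun i => -(g2 i) := ⟨_, rfl⟩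
    have hG2 : ∀ i, G2 i = -(g2 i) := fun i => by rw [hG2def]
    have hsum' : ∀ i, a i = m * g1 i + (-n) * G2 i := by
      intro i; rw [hG2 i]; linear_combination hsum i
    have hg' : g1 0 * G2 1 - g1 1 * G2 0 = 1 ∨ g1 0 * G2 1 - g1 1 * G2 0 = -1 := by
      rw [hG2 0, hG2 1]
      rcases hgraw with h | h
      · right; linear_combination -h
      · left; linear_combination -h
    have h2' : IW V hV G2 ≤ M := by rw [hG2def, IW_neg]; exact h2
    exact core V hV a g1 G2 b0 m (-n) hm2 (by omega) hsum' hb0 hg' M hFa h1 h2'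
  · obtain ⟨G1, hG1def⟩ : ∃ f : Fin 2 → ℤ, f = fun i => -(g1 i) := ⟨_, rfl⟩
    have hG1 : ∀ i, G1 i = -(g1 i) := fun i => by rw [hG1def]
    have hsum' : ∀ i, a i = (-m) * G1 i + n * g2 i := by
      intro i; rw [hG1 i]; linear_combination hsum i
    have hg' : G1 0 * g2 1 - G1 1 * g2 0 = 1 ∨ G1 0 * g2 1 - G1 1 * g2 0 = -1 := by
      rw [hG1 0, hG1 1]
      rcases hgraw with h | h
      · right; linear_combination -h
      · left; linear_combination -h
    have h1' : IW V hV G1 ≤ M := by rw [hG1def, IW_neg]; exact h1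
    exact core V hV a G1 g2 b0 (-m) n (by omega) hn2 hsum' hb0 hg' M hFa h1' h2
  · obtain ⟨G1, hG1def⟩ : ∃ f : Fin 2 → ℤ, f = fun i => -(g1 i) := ⟨_, rfl⟩
    have hG1 : ∀ i, G1 i = -(g1 i) := fun i => by rw [hG1def]
    obtain ⟨G2, hG2def⟩ : ∃ f : Fin 2 → ℤ, f = fun i => -(g2 i) := ⟨_, rfl⟩
    have hG2 : ∀ i, G2 i = -(g2 i) := fun i => by rw [hG2def]
    have hsum' : ∀ i, a i = (-m) * G1 i + (-n) * G2 i := by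
      intro i; rw [hG1 i, hG2 i]; linear_combination hsum i
    have hg' : G1 0 * G2 1 - G1 1 * G2 0 = 1 ∨ G1 0 * G2 1 - G1 1 * G2 0 = -1 := by
      rw [hG1 0, hG1 1, hG2 0, hG2 1]
      rcases hgraw with h | h
      · left; linear_combination h
      · right; linear_combination h
    have h1' : IW V hV G1 ≤ M := by rw [hG1def, IW_neg]; exact h1
    have h2' : IW V hV G2 ≤ M := by rw [hG2def, IW_neg]; exact h2
    exact core V hV a G1 G2 b0 (-m) (-n) (by omega) (by omega) hsum' hb0 hg' M hFa h1' h2'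

end LatAux

lemma row_prim (A : Matrix (Fin 2) (Fin 2) ℤ) (hA : A.det = 1 ∨ A.det = -1) (i : Fin 2) :
    Int.gcd (A i 0) (A i 1) = 1 := by
  have hdet2 : A.det = A 0 0 * A 1 1 - A 0 1 * A 1 0 := Matrix.det_fin_two A
  have hdvd : ((Int.gcd (A i 0) (A i 1) : ℤ)) ∣ A.det := by
    rw [hdet2]
    fin_cases i
    · exact dvd_sub ((Int.gcd_dvd_left _ _).mul_right _) ((Int.gcd_dvd_right _ _).mul_right _)
    · exact dvd_sub ((Int.gcd_dvd_right _ _).mul_left _) ((Int.gcd_dvd_left _ _).mul_left _)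
  have h1 : ((Int.gcd (A i 0) (A i 1) : ℤ)) ∣ 1 := by
    rcases hA with h | h <;> rw [h] at hdvd
    · exact hdvd
    · exact (dvd_neg).mp hdvd
  have h2 := Int.isUnit_iff.mp (isUnit_of_dvd_one h1)
  rcases h2 with h2 | h2
  · exact_mod_cast h2
  · exfalso
    have h3 : (0:ℤ) ≤ ((Int.gcd (A i 0) (A i 1) : ℤ)) := Int.natCast_nonneg _
    omega

lemma prim_witness (a : Fin 2 → ℤ) (h : Int.gcd (a 0) (a 1) = 1) :
    ∃ b0 : Fin 2 → ℤ, a 0 * b0 1 - a 1 * b0 0 = 1 := by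
  have hco : IsCoprime (a 0) (a 1) := Int.isCoprime_iff_gcd_eq_one.mpr h
  obtain ⟨u, v, huv⟩ := hco
  refine ⟨![-v, u], ?_⟩
  simp only [Matrix.cons_val_zero, Matrix.cons_val_one, Matrix.head_cons]
  linear_combination huv


/-- The set of pairs `(a,b)` such that some affine unimodular image of `P` lies in
`[0,a] × [0,b]` has a minimum (w.r.t. the product order) at `(w(P), ls_□(P))`:
(1) `P` fits unimodularly in `[0, w(P)] × [0, ls_□(P)]`, and (2) whenever `P` fits
unimodularly in `[0,a] × [0,b]` with `a ≤ b`, we have `w(P) ≤ a` and `ls_□(P) ≤ b`. -/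
theorem fitsInRect_min (V : Finset (Fin 2 → ℤ)) (hV : V.Nonempty)
    (P : Set (Fin 2 → ℝ)) (hP : P = latticePoly2 V) (w l : ℤ)
    (hw : IsLeast (widthSet2 P) (w : ℝ))
    (hl : IsLeast {l' : ℤ | FitsInSquare P l'} l) :
    FitsInRect P w l ∧ ∀ a b : ℤ, a ≤ b → FitsInRect P a b → w ≤ a ∧ l ≤ b := by
  subst hP
  obtain ⟨A, v, hAdet, hAin⟩ := hl.1
  have hg1 : LatAux.IW V hV (A 0) ≤ l := LatAux.row_bound V hV A v 0 l (fun p hp => hAin p hp 0)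
  have hg2 : LatAux.IW V hV (A 1) ≤ l := LatAux.row_bound V hV A v 1 l (fun p hp => hAin p hp 1)
  have hgdet : A 0 0 * A 1 1 - A 0 1 * A 1 0 = 1 ∨ A 0 0 * A 1 1 - A 0 1 * A 1 0 = -1 := by
    rw [Matrix.det_fin_two] at hAdet; exact hAdet
  have hwlow : ∀ c : Fin 2 → ℤ, Int.gcd (c 0) (c 1) = 1 → w ≤ LatAux.IW V hV c := by
    intro c hc
    have hle : (w:ℝ) ≤ width2 (latticePoly2 V) c := hw.2 ⟨c, hc, rfl⟩
    rw [LatAux.width2_eq V hV c] at hle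
    exact_mod_cast hle
  obtain ⟨aw, hawprim, haww⟩ := hw.1
  have hIWaw : LatAux.IW V hV aw = w := by
    have : ((LatAux.IW V hV aw : ℤ) : ℝ) = (w : ℝ) := by rw [← LatAux.width2_eq V hV aw]; exact haww
    exact_mod_cast this
  have hwl : w ≤ l := le_trans (hwlow (A 0) (row_prim A hAdet 0)) hg1
  obtain ⟨b0, hb0⟩ := prim_witness aw hawprim
  obtain ⟨b, hdetb, hIWb⟩ := LatAux.exists_partner V hV aw (A 0) (A 1) b0 hb0 hgdet l
    (le_trans (le_of_eq hIWaw) hwl) hg1 hg2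
  constructor
  · exact LatAux.fits_of_rows V hV aw b hdetb w l (le_of_eq hIWaw) hIWb
  · intro a' b' hab hfit
    obtain ⟨B, t, hBdet, hBin⟩ := hfit
    constructor
    · have hrow : LatAux.IW V hV (B 0) ≤ a' := LatAux.row_bound V hV B t 0 a' (fun p hp => (hBin p hp).1)
      exact le_trans (hwlow (B 0) (row_prim B hBdet 0)) hrow
    · apply hl.2
      refine ⟨B, t, hBdet, ?_⟩
      intro p hp
      rw [Fin.forall_fin_two]
      constructor
      · obtain ⟨x1, x2⟩ := (hBin p hp).1
        exact ⟨x1, le_trans x2 (by exact_mod_cast hab)⟩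
      · exact (hBin p hp).2
end

section
/- Let P ⊂ ℝ³ be a lattice polytope with Δ_P(x) = l₁ ≤ Δ_P(y) = l₂ ≤ Δ_P(z) = l. Suppose Δ_P(x+y) ≥ l₂ and Δ_P(x−y) ≥ l₂. If integers a, b satisfy Δ_P(ax + by + z) < l, then: (1) if |a| ≥ |b| then |b| ≤ (2l−1)/l₂; and (2) if |b| ≥ |a| then |a| ≤ (2l−1)/l₁. -/
/-- The lattice polytope determined by a nonempty finite set `V` of lattice points:
the convex hull in `ℝ³` of the corresponding real points. -/
def latticePoly3 (V : Finset (Fin 3 → ℤ)) : Set (Fin 3 → ℝ) :=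
  convexHull ℝ ((fun v : Fin 3 → ℤ => fun i => (v i : ℝ)) '' (V : Set (Fin 3 → ℤ)))

/-- `Δ_P(a₀·x + a₁·y + a₂·z) = w_a(P)`, the lattice width of `P ⊆ ℝ³` in direction
`a ∈ ℤ³`: the sup minus the inf of the linear form `p ↦ a·p` over `P`. -/
noncomputable def width3 (P : Set (Fin 3 → ℝ)) (a : Fin 3 → ℤ) : ℝ :=
  sSup ((fun p => ∑ i, (a i : ℝ) * p i) '' P) - sInf ((fun p => ∑ i, (a i : ℝ) * p i) '' P)

/-- `T(P) ⊆ [0,l]³` for some affine unimodular transformation `T : p ↦ A·p + v`. -/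
def FitsInCube3 (P : Set (Fin 3 → ℝ)) (l : ℤ) : Prop :=
  ∃ (A : Matrix (Fin 3) (Fin 3) ℤ) (v : Fin 3 → ℤ),
    (A.det = 1 ∨ A.det = -1) ∧
    ∀ p ∈ P, ∀ i, ((A.map (fun z : ℤ => (z : ℝ))).mulVec p + fun j => (v j : ℝ)) i ∈
      Set.Icc (0 : ℝ) (l : ℝ)

/-- The set of lattice widths of `P` in all primitive directions `a ∈ ℤ³`. -/
def widthSet3 (P : Set (Fin 3 → ℝ)) : Set ℝ :=
  {w | ∃ a : Fin 3 → ℤ, Int.gcd (a 0) (Int.gcd (a 1) (a 2)) = 1 ∧ width3 P a = w}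

/-- Membership in the set `S` of Definition 3.5 (for parameters `l₁ ≤ l₂ ≤ l`):
`(a,b) ∈ S` iff (1) `|a| ≥ |b|` implies `|b| ≤ (2l−1)/l₂` and `|a| ≤ (2l−1+|b|·l₂)/l₁`,
and (2) `|b| ≥ |a|` implies `|a| ≤ (2l−1)/l₁` and `|b| ≤ (2l−1+|a|·l₁)/l₂`. -/
def MemS (l₁ l₂ l a b : ℤ) : Prop :=
  (|b| ≤ |a| → ((|b| : ℝ) ≤ (2 * (l : ℝ) - 1) / (l₂ : ℝ) ∧
    (|a| : ℝ) ≤ (2 * (l : ℝ) - 1 + (|b| : ℝ) * (l₂ : ℝ)) / (l₁ : ℝ))) ∧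
  (|a| ≤ |b| → ((|a| : ℝ) ≤ (2 * (l : ℝ) - 1) / (l₁ : ℝ) ∧
    (|b| : ℝ) ≤ (2 * (l : ℝ) - 1 + (|a| : ℝ) * (l₁ : ℝ)) / (l₂ : ℝ)))

namespace SBaux

def g (a v : Fin 3 → ℤ) : ℤ := ∑ i, a i * v i

lemma cast_g (a v : Fin 3 → ℤ) : ((g a v : ℤ) : ℝ) = ∑ i, (a i : ℝ) * ((v i : ℤ) : ℝ) := by
  simp [g]

lemma f_linear (a : Fin 3 → ℤ) :
    IsLinearMap ℝ (fun p : Fin 3 → ℝ => ∑ i, (a i : ℝ) * p i) := by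
  constructor
  · intro p q
    simp [mul_add, Finset.sum_add_distrib]
  · intro c p
    simp only [Pi.smul_apply, smul_eq_mul, Finset.mul_sum]
    exact Finset.sum_congr rfl fun i _ => by ring

lemma isGreatest_width (V : Finset (Fin 3 → ℤ)) (hV : V.Nonempty) (a : Fin 3 → ℤ) :
    IsGreatest ((fun p => ∑ i, (a i : ℝ) * p i) '' latticePoly3 V)
      (((V.image (g a)).max' (hV.image _) : ℤ) : ℝ) := by
  constructor
  · obtain ⟨v, hv, hveq⟩ := Finset.mem_image.mp ((V.image (g a)).max'_mem (hV.image _))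
    refine ⟨fun i => (v i : ℝ), subset_convexHull ℝ _ (Set.mem_image_of_mem _ hv), ?_⟩
    rw [← hveq, cast_g]
  · rintro x ⟨p, hp, rfl⟩
    rw [latticePoly3] at hp
    refine convexHull_min ?_ (convex_halfSpace_le (f_linear a) _) hp
    rintro y ⟨v, hv, rfl⟩
    show ∑ i, (a i : ℝ) * ((v i : ℤ) : ℝ) ≤ _
    rw [← cast_g]
    exact_mod_cast Finset.le_max' _ _ (Finset.mem_image_of_mem _ hv)

lemma isLeast_width (V : Finset (Fin 3 → ℤ)) (hV : V.Nonempty) (a : Fin 3 → ℤ) :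
    IsLeast ((fun p => ∑ i, (a i : ℝ) * p i) '' latticePoly3 V)
      (((V.image (g a)).min' (hV.image _) : ℤ) : ℝ) := by
  constructor
  · obtain ⟨v, hv, hveq⟩ := Finset.mem_image.mp ((V.image (g a)).min'_mem (hV.image _))
    refine ⟨fun i => (v i : ℝ), subset_convexHull ℝ _ (Set.mem_image_of_mem _ hv), ?_⟩
    rw [← hveq, cast_g]
  · rintro x ⟨p, hp, rfl⟩
    rw [latticePoly3] at hp
    refine convexHull_min ?_ (convex_halfSpace_ge (f_linear a) _) hp
    rintro y ⟨v, hv, rfl⟩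
    show _ ≤ ∑ i, (a i : ℝ) * ((v i : ℤ) : ℝ)
    rw [← cast_g]
    exact_mod_cast Finset.min'_le _ _ (Finset.mem_image_of_mem _ hv)

lemma width3_eq (V : Finset (Fin 3 → ℤ)) (hV : V.Nonempty) (a : Fin 3 → ℤ) :
    width3 (latticePoly3 V) a =
      (((V.image (g a)).max' (hV.image _) : ℤ) : ℝ) - (((V.image (g a)).min' (hV.image _) : ℤ) : ℝ) := by
  rw [width3, (isGreatest_width V hV a).csSup_eq, (isLeast_width V hV a).csInf_eq]


lemma pair_le (V : Finset (Fin 3 → ℤ)) (hV : V.Nonempty) (a : Fin 3 → ℤ)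
    {p q : Fin 3 → ℤ} (hp : p ∈ V) (hq : q ∈ V) :
    ((g a p - g a q : ℤ) : ℝ) ≤ width3 (latticePoly3 V) a := by
  rw [width3_eq V hV a]
  have h1 : g a p ≤ (V.image (g a)).max' (hV.image _) :=
    Finset.le_max' _ _ (Finset.mem_image_of_mem _ hp)
  have h2 : (V.image (g a)).min' (hV.image _) ≤ g a q :=
    Finset.min'_le _ _ (Finset.mem_image_of_mem _ hq)
  have h1' : ((g a p : ℤ) : ℝ) ≤ (((V.image (g a)).max' (hV.image _) : ℤ) : ℝ) := by exact_mod_cast h1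
  have h2' : (((V.image (g a)).min' (hV.image _) : ℤ) : ℝ) ≤ ((g a q : ℤ) : ℝ) := by exact_mod_cast h2
  push_cast at *
  linarith

lemma exists_pair (V : Finset (Fin 3 → ℤ)) (hV : V.Nonempty) (a : Fin 3 → ℤ) :
    ∃ p ∈ V, ∃ q ∈ V, ((g a p - g a q : ℤ) : ℝ) = width3 (latticePoly3 V) a := by
  obtain ⟨p, hp, hpe⟩ := Finset.mem_image.mp ((V.image (g a)).max'_mem (hV.image _))
  obtain ⟨q, hq, hqe⟩ := Finset.mem_image.mp ((V.image (g a)).min'_mem (hV.image _))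
  exact ⟨p, hp, q, hq, by rw [width3_eq V hV a, ← hpe, ← hqe]; push_cast; ring⟩

lemma pair_abs_le (V : Finset (Fin 3 → ℤ)) (hV : V.Nonempty) (a : Fin 3 → ℤ) (c : ℤ)
    (hw : width3 (latticePoly3 V) a ≤ (c : ℝ))
    {p q : Fin 3 → ℤ} (hp : p ∈ V) (hq : q ∈ V) : |g a p - g a q| ≤ c := by
  have h1 : ((g a p - g a q : ℤ) : ℝ) ≤ (c : ℝ) := le_trans (pair_le V hV a hp hq) hw
  have h2 : ((g a q - g a p : ℤ) : ℝ) ≤ (c : ℝ) := le_trans (pair_le V hV a hq hp) hw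
  rw [abs_le]
  constructor
  · have h2'' : g a q - g a p ≤ c := by exact_mod_cast h2
    omega
  · exact_mod_cast h1

lemma pair_abs_lt (V : Finset (Fin 3 → ℤ)) (hV : V.Nonempty) (a : Fin 3 → ℤ) (c : ℤ)
    (hw : width3 (latticePoly3 V) a < (c : ℝ))
    {p q : Fin 3 → ℤ} (hp : p ∈ V) (hq : q ∈ V) : |g a p - g a q| ≤ c - 1 := by
  have h1 : ((g a p - g a q : ℤ) : ℝ) < (c : ℝ) := lt_of_le_of_lt (pair_le V hV a hp hq) hw
  have h2 : ((g a q - g a p : ℤ) : ℝ) < (c : ℝ) := lt_of_le_of_lt (pair_le V hV a hq hp) hw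
  have h1' : g a p - g a q < c := by exact_mod_cast h1
  have h2' : g a q - g a p < c := by exact_mod_cast h2
  rw [abs_le]; omega

lemma eps_exists (a b : ℤ) :
    ∃ ε : ℤ, (ε = 1 ∨ ε = -1) ∧ |b - a * ε| = |(|a| - |b|)| ∧ |a - b * ε| = |(|a| - |b|)| := by
  rcases le_or_gt 0 a with ha | ha <;> rcases le_or_gt 0 b with hb | hb
  · exact ⟨1, Or.inl rfl, by rw [abs_of_nonneg ha, abs_of_nonneg hb, mul_one, abs_sub_comm], by
      rw [abs_of_nonneg ha, abs_of_nonneg hb, mul_one]⟩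
  · refine ⟨-1, Or.inr rfl, ?_, ?_⟩ <;>
    · rw [abs_of_nonneg ha, abs_of_neg hb]
      rw [abs_eq_abs]; omega
  · refine ⟨-1, Or.inr rfl, ?_, ?_⟩ <;>
    · rw [abs_of_neg ha, abs_of_nonneg hb]
      rw [abs_eq_abs]; omega
  · refine ⟨1, Or.inl rfl, ?_, ?_⟩ <;>
    · rw [abs_of_neg ha, abs_of_neg hb]
      rw [abs_eq_abs]; omega

lemma main_int (l₁ l₂ l a b ε W u0 u1 u2 : ℤ)
    (h0 : 0 < l₁) (h12 : l₁ ≤ l₂) (h2l : l₂ ≤ l)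
    (hε : ε = 1 ∨ ε = -1) (hW : l₂ ≤ W)
    (hu0W : u0 + ε * u1 = W)
    (hu0 : |u0| ≤ l₁) (hu1 : |u1| ≤ l₂) (hu2 : |u2| ≤ l)
    (hbig : |a * u0 + b * u1 + u2| ≤ l - 1)
    (hs1 : |b - a * ε| = |(|a| - |b|)|) (hs2 : |a - b * ε| = |(|a| - |b|)|) :
    (|b| ≤ |a| → |b| * l₂ ≤ 2 * l - 1) ∧ (|a| ≤ |b| → |a| * l₁ ≤ 2 * l - 1) := by
  have hε2 : ε * ε = 1 := by rcases hε with rfl | rfl <;> ring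
  have habs : |a * u0 + b * u1| ≤ 2 * l - 1 := by
    calc |a * u0 + b * u1| = |(a * u0 + b * u1 + u2) + (-u2)| := by ring_nf
    _ ≤ |a * u0 + b * u1 + u2| + |(-u2)| := abs_add_le _ _
    _ ≤ (l - 1) + l := by rw [abs_neg]; exact add_le_add hbig hu2
    _ = 2 * l - 1 := by ring
  have hWpos : 0 < W := by linarith
  constructor
  · intro hba
    have key : a * u0 + b * u1 = a * W + (b - a * ε) * u1 := by
      rw [← hu0W]; rcases hε with rfl | rfl <;> ring
    have h3 : |a * W| ≤ |a * u0 + b * u1| + |(b - a * ε) * u1| := by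
      calc |a * W| = |(a * u0 + b * u1) - (b - a * ε) * u1| := by rw [key]; ring_nf
      _ ≤ _ := abs_sub _ _
    have hAW : |a * W| = |a| * W := by rw [abs_mul, abs_of_pos hWpos]
    have hC : |(b - a * ε) * u1| ≤ (|a| - |b|) * l₂ := by
      rw [abs_mul, hs1, abs_of_nonneg (by omega : (0:ℤ) ≤ |a| - |b|)]
      exact mul_le_mul_of_nonneg_left hu1 (by omega)
    nlinarith [abs_nonneg a, mul_nonneg (abs_nonneg a) (by linarith : (0:ℤ) ≤ W - l₂)]
  · intro hab
    have key : a * u0 + b * u1 = b * ε * W + (a - b * ε) * u0 := by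
      rw [← hu0W]; rcases hε with rfl | rfl <;> ring
    have h3 : |b * ε * W| ≤ |a * u0 + b * u1| + |(a - b * ε) * u0| := by
      calc |b * ε * W| = |(a * u0 + b * u1) - (a - b * ε) * u0| := by rw [key]; ring_nf
      _ ≤ _ := abs_sub _ _
    have hBW : |b * ε * W| = |b| * W := by
      rw [abs_mul, abs_mul, abs_of_pos hWpos]
      rcases hε with rfl | rfl <;> simp
    have hC : |(a - b * ε) * u0| ≤ (|b| - |a|) * l₁ := by
      rw [abs_mul, hs2, abs_sub_comm, abs_of_nonneg (by omega : (0:ℤ) ≤ |b| - |a|)]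
      exact mul_le_mul_of_nonneg_left hu0 (by omega)
    nlinarith [abs_nonneg b, mul_nonneg (abs_nonneg b) (by linarith : (0:ℤ) ≤ W - l₂),
      mul_nonneg (abs_nonneg b) (by linarith : (0:ℤ) ≤ l₂ - l₁)]

end SBaux

open SBaux in
/-- Lemma (strong bound): with `Δ_P(x) = l₁ ≤ Δ_P(y) = l₂ ≤ Δ_P(z) = l` and
`Δ_P(x±y) ≥ l₂`, if `Δ_P(ax + by + z) < l` then: (1) if `|a| ≥ |b|` then
`|b| ≤ (2l−1)/l₂`; (2) if `|b| ≥ |a|` then `|a| ≤ (2l−1)/l₁`. -/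
theorem strong_bound (V : Finset (Fin 3 → ℤ)) (hV : V.Nonempty)
    (P : Set (Fin 3 → ℝ)) (hP : P = latticePoly3 V) (l₁ l₂ l : ℤ)
    (h0 : 0 < l₁) (h12 : l₁ ≤ l₂) (h2l : l₂ ≤ l)
    (hx : width3 P ![1, 0, 0] = (l₁ : ℝ)) (hy : width3 P ![0, 1, 0] = (l₂ : ℝ))
    (hz : width3 P ![0, 0, 1] = (l : ℝ))
    (hp : (l₂ : ℝ) ≤ width3 P ![1, 1, 0]) (hm : (l₂ : ℝ) ≤ width3 P ![1, -1, 0])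
    (a b : ℤ) (hab : width3 P ![a, b, 1] < (l : ℝ)) :
    (|b| ≤ |a| → (|b| : ℝ) ≤ (2 * (l : ℝ) - 1) / (l₂ : ℝ)) ∧
    (|a| ≤ |b| → (|a| : ℝ) ≤ (2 * (l : ℝ) - 1) / (l₁ : ℝ)) := by
  subst hP
  have hl2p : (0:ℤ) < l₂ := lt_of_lt_of_le h0 h12
  have hl2R : (0:ℝ) < (l₂ : ℝ) := by exact_mod_cast hl2p
  have hl1R : (0:ℝ) < (l₁ : ℝ) := by exact_mod_cast h0
  have hlpos : (0:ℝ) ≤ 2 * (l:ℝ) - 1 := by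
    have : (1:ℤ) ≤ l := le_trans h0 (le_trans h12 h2l)
    have : (1:ℝ) ≤ (l:ℝ) := by exact_mod_cast this
    linarith
  -- main case: both a b nonzero
  have main : a ≠ 0 → b ≠ 0 →
      (|b| ≤ |a| → |b| * l₂ ≤ 2 * l - 1) ∧ (|a| ≤ |b| → |a| * l₁ ≤ 2 * l - 1) := by
    intro ha0 hb0
    obtain ⟨ε, hε, hs1, hs2⟩ := eps_exists a b
    have hwd : (l₂ : ℝ) ≤ width3 (latticePoly3 V) ![1, ε, 0] := by
      rcases hε with rfl | rfl
      · exact hp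
      · exact hm
    obtain ⟨p, hpV, q, hqV, hWeq⟩ := exists_pair V hV ![1, ε, 0]
    have hW : l₂ ≤ g ![1, ε, 0] p - g ![1, ε, 0] q := by
      have : (l₂ : ℝ) ≤ ((g ![1, ε, 0] p - g ![1, ε, 0] q : ℤ) : ℝ) := hWeq ▸ hwd
      exact_mod_cast this
    have hgx : ∀ v, g ![1, 0, 0] v = v 0 := fun v => by
      simp [g, Fin.sum_univ_three]
    have hgy : ∀ v, g ![0, 1, 0] v = v 1 := fun v => by
      simp [g, Fin.sum_univ_three]
    have hgz : ∀ v, g ![0, 0, 1] v = v 2 := fun v => by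
      simp [g, Fin.sum_univ_three]
    have hgd : ∀ v, g ![1, ε, 0] v = v 0 + ε * v 1 := fun v => by
      simp [g, Fin.sum_univ_three]
    have hgab : ∀ v, g ![a, b, 1] v = a * v 0 + b * v 1 + v 2 := fun v => by
      simp [g, Fin.sum_univ_three]
    have hu0 : |p 0 - q 0| ≤ l₁ := by
      have := pair_abs_le V hV ![1,0,0] l₁ (le_of_eq hx) hpV hqV
      rwa [hgx, hgx] at this
    have hu1 : |p 1 - q 1| ≤ l₂ := by
      have := pair_abs_le V hV ![0,1,0] l₂ (le_of_eq hy) hpV hqV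
      rwa [hgy, hgy] at this
    have hu2 : |p 2 - q 2| ≤ l := by
      have := pair_abs_le V hV ![0,0,1] l (le_of_eq hz) hpV hqV
      rwa [hgz, hgz] at this
    have hbig : |a * (p 0 - q 0) + b * (p 1 - q 1) + (p 2 - q 2)| ≤ l - 1 := by
      have := pair_abs_lt V hV ![a,b,1] l hab hpV hqV
      rw [hgab, hgab] at this
      convert this using 2
      ring
    have hu0W : (p 0 - q 0) + ε * (p 1 - q 1) = g ![1, ε, 0] p - g ![1, ε, 0] q := by
      rw [hgd, hgd]; ring
    exact main_int l₁ l₂ l a b ε _ _ _ _ h0 h12 h2l hε hW hu0W hu0 hu1 hu2 hbig hs1 hs2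
  constructor
  · intro hba
    rcases eq_or_ne b 0 with rfl | hb0
    · simpa using div_nonneg hlpos (le_of_lt hl2R)
    · have ha0 : a ≠ 0 := by
        intro h; subst h; simp at hba; omega
      have := (main ha0 hb0).1 hba
      rw [le_div_iff₀ hl2R]
      exact_mod_cast this
  · intro hab'
    rcases eq_or_ne a 0 with rfl | ha0
    · simpa using div_nonneg hlpos (le_of_lt hl1R)
    · have hb0 : b ≠ 0 := by
        intro h; subst h; simp at hab'; omega
      have := (main ha0 hb0).2 hab'
      rw [le_div_iff₀ hl1R]
      exact_mod_cast this
end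

section
/- Let l₁ ≤ l₂ ≤ l be positive integers and let S ⊂ ℤ² be the set of pairs (a,b) such that both implications hold: if |a| ≥ |b| then |b| ≤ (2l−1)/l₂ and |a| ≤ (2l−1+|b|·l₂)/l₁; and if |b| ≥ |a| then |a| ≤ (2l−1)/l₁ and |b| ≤ (2l−1+|a|·l₁)/l₂. Then S is finite and its cardinality is at most 64·l²/(l₁·l₂). -/
section AuxS

private lemma ediv_facts (n d : ℤ) (hd : 0 < d) : (n / d) * d ≤ n ∧ n < (n / d + 1) * d :=
  ⟨Int.ediv_mul_le n (ne_of_gt hd), Int.lt_ediv_add_one_mul_self n hd⟩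

set_option maxHeartbeats 1000000 in
private lemma key_ineq (l₁ l₂ l A A' B B' : ℤ) (h1 : 0 < l₁) (h12 : l₁ ≤ l₂) (h2l : l₂ ≤ l)
    (hA'1 : A' * l₁ ≤ 2*l-1) (hA'2 : 2*l-1 < (A'+1)*l₁)
    (hA1 : A * l₁ ≤ 4*l-2) (hA2 : 4*l-2 < (A+1)*l₁)
    (hB'1 : B' * l₂ ≤ 2*l-1) (hB'2 : 2*l-1 < (B'+1)*l₂)
    (hB1 : B * l₂ ≤ 4*l-2) (hB2 : 4*l-2 < (B+1)*l₂) :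
    l₁ * l₂ * ((2*A+1)*(2*B') + (2*A'+1) + ((2*A')*(2*B+1) + (2*B'+1))
      - (2*A'+1)*(2*B'+1)) ≤ 64 * l^2 := by
  have hl2 : 0 < l₂ := lt_of_lt_of_le h1 h12
  have hl : 0 < l := lt_of_lt_of_le hl2 h2l
  have hA'pos : 1 ≤ A' := by nlinarith
  have hB'pos : 1 ≤ B' := by nlinarith
  have hAlb : 2*A' ≤ A := by nlinarith
  have hAub : A ≤ 2*A'+1 := by nlinarith
  have hBlb : 2*B' ≤ B := by nlinarith
  have hBub : B ≤ 2*B'+1 := by nlinarith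
  have hApos : 0 < A := by linarith
  have hBpos : 0 < B := by linarith
  by_cases hexc : A' = 1 ∧ B' = 1 ∧ A = 2 ∧ B = 2
  · obtain ⟨e1, e2, e3, e4⟩ := hexc
    subst e1; subst e2; subst e3; subst e4
    have : l = 1 := by nlinarith
    subst this
    have h1' : l₁ = 1 := by omega
    have h2' : l₂ = 1 := by omega
    subst h1'; subst h2'; norm_num
  · have hconst : (2*A+1)*(2*B') + (2*A'+1) + ((2*A')*(2*B+1) + (2*B'+1))
        - (2*A'+1)*(2*B'+1) ≤ 4*A*B := by
      have hs : A = 2*A' ∨ A = 2*A'+1 := by omega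
      have ht : B = 2*B' ∨ B = 2*B'+1 := by omega
      rcases hs with hs | hs <;> rcases ht with ht | ht <;> subst hs <;> subst ht
      · have hne : ¬(A' = 1 ∧ B' = 1) := by
          intro hu; exact hexc ⟨hu.1, hu.2, by omega, by omega⟩
        have hcase : 2 ≤ A' ∨ 2 ≤ B' := by omega
        rcases hcase with h | h
        · nlinarith [mul_nonneg (show (0:ℤ) ≤ A' by linarith) (show (0:ℤ) ≤ B'-1 by linarith),
            mul_le_mul_of_nonneg_left (show (1:ℤ) ≤ A'-1 by linarith) (show (0:ℤ) ≤ B' by linarith)]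
        · nlinarith [mul_nonneg (show (0:ℤ) ≤ B' by linarith) (show (0:ℤ) ≤ A'-1 by linarith),
            mul_le_mul_of_nonneg_left (show (1:ℤ) ≤ B'-1 by linarith) (show (0:ℤ) ≤ A' by linarith)]
      · nlinarith [mul_nonneg (show (0:ℤ) ≤ A'-1 by linarith) (show (0:ℤ) ≤ B' by linarith)]
      · nlinarith [mul_nonneg (show (0:ℤ) ≤ A' by linarith) (show (0:ℤ) ≤ B'-1 by linarith)]
      · nlinarith [mul_nonneg (show (0:ℤ) ≤ A' by linarith) (show (0:ℤ) ≤ B' by linarith)]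
    have hAl : 0 ≤ A * l₁ := by positivity
    have hBl : 0 ≤ B * l₂ := by positivity
    calc l₁ * l₂ * ((2*A+1)*(2*B') + (2*A'+1) + ((2*A')*(2*B+1) + (2*B'+1))
          - (2*A'+1)*(2*B'+1))
        ≤ l₁ * l₂ * (4*A*B) := by
          apply mul_le_mul_of_nonneg_left hconst (by positivity)
      _ = 4 * ((A*l₁) * (B*l₂)) := by ring
      _ ≤ 4 * ((4*l-2) * (4*l-2)) := by
          have := mul_le_mul hA1 hB1 hBl (by linarith : (0:ℤ) ≤ 4*l-2)
          linarith
      _ ≤ 64 * l^2 := by nlinarith [hl, sq_nonneg l]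

end AuxS

set_option maxHeartbeats 1000000 in
/-- Proposition: the set `S` is finite and its cardinality is at most `64·l²/(l₁·l₂)`. -/
theorem S_finite_card_le (l₁ l₂ l : ℤ) (h0 : 0 < l₁) (h12 : l₁ ≤ l₂) (h2l : l₂ ≤ l) :
    {p : ℤ × ℤ | MemS l₁ l₂ l p.1 p.2}.Finite ∧
    (({p : ℤ × ℤ | MemS l₁ l₂ l p.1 p.2}.ncard : ℝ) ≤
      64 * (l : ℝ) ^ 2 / ((l₁ : ℝ) * (l₂ : ℝ))) := by
  have hl1 : (0:ℤ) < l₁ := h0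
  have hl2 : (0:ℤ) < l₂ := lt_of_lt_of_le h0 h12
  have hl : (0:ℤ) < l := lt_of_lt_of_le hl2 h2l
  have hl1R : (0:ℝ) < (l₁ : ℝ) := by exact_mod_cast hl1
  have hl2R : (0:ℝ) < (l₂ : ℝ) := by exact_mod_cast hl2
  set A' : ℤ := (2*l-1)/l₁ with hA'def
  set A : ℤ := (4*l-2)/l₁ with hAdef
  set B' : ℤ := (2*l-1)/l₂ with hB'def
  set B : ℤ := (4*l-2)/l₂ with hBdef
  obtain ⟨hA'1, hA'2⟩ := ediv_facts (2*l-1) l₁ hl1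
  obtain ⟨hA1, hA2⟩ := ediv_facts (4*l-2) l₁ hl1
  obtain ⟨hB'1, hB'2⟩ := ediv_facts (2*l-1) l₂ hl2
  obtain ⟨hB1, hB2⟩ := ediv_facts (4*l-2) l₂ hl2
  have hA'pos : 1 ≤ A' := by nlinarith
  have hB'pos : 1 ≤ B' := by nlinarith
  have hAlb : 2*A' ≤ A := by nlinarith
  have hBlb : 2*B' ≤ B := by nlinarith
  have hA'A : A' ≤ A := by linarith
  have hB'B : B' ≤ B := by linarith
  set F1 : Finset (ℤ × ℤ) :=
    Finset.Icc (-A) A ×ˢ (Finset.Icc (-B') B' \ {0}) ∪ Finset.Icc (-A') A' ×ˢ {0} with hF1def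
  set F2 : Finset (ℤ × ℤ) :=
    (Finset.Icc (-A') A' \ {0}) ×ˢ Finset.Icc (-B) B ∪ ({0} : Finset ℤ) ×ˢ Finset.Icc (-B') B'
    with hF2def
  have hsub : {p : ℤ × ℤ | MemS l₁ l₂ l p.1 p.2} ⊆ ↑(F1 ∪ F2) := by
    rintro ⟨a, b⟩ hp
    obtain ⟨hm1, hm2⟩ := hp
    simp only [Finset.coe_union, Set.mem_union, Finset.mem_coe, hF1def, hF2def,
      Finset.mem_union, Finset.mem_product, Finset.mem_Icc, Finset.mem_sdiff,
      Finset.mem_singleton]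
    rcases le_total |b| |a| with hc | hc
    · obtain ⟨hb, ha⟩ := hm1 hc
      rw [le_div_iff₀ hl2R] at hb
      rw [le_div_iff₀ hl1R] at ha
      have hbz : |b| * l₂ ≤ 2*l - 1 := by exact_mod_cast hb
      have haz : |a| * l₁ ≤ 2*l - 1 + |b| * l₂ := by exact_mod_cast ha
      have hbB' : |b| ≤ B' := (Int.le_ediv_iff_mul_le hl2).mpr hbz
      have haA : |a| ≤ A := (Int.le_ediv_iff_mul_le hl1).mpr (by linarith)
      have haA' : b = 0 → |a| ≤ A' := by
        intro hb0
        apply (Int.le_ediv_iff_mul_le hl1).mpr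
        have : |b| = 0 := by simp [hb0]
        rw [this] at haz; linarith
      have h1 := abs_le.mp hbB'
      have h2 := abs_le.mp haA
      by_cases hb0 : b = 0
      · have h3 := abs_le.mp (haA' hb0)
        left; right; exact ⟨⟨h3.1, h3.2⟩, hb0⟩
      · left; left; exact ⟨⟨h2.1, h2.2⟩, ⟨h1.1, h1.2⟩, hb0⟩
    · obtain ⟨ha, hb⟩ := hm2 hc
      rw [le_div_iff₀ hl1R] at ha
      rw [le_div_iff₀ hl2R] at hb
      have haz : |a| * l₁ ≤ 2*l - 1 := by exact_mod_cast ha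
      have hbz : |b| * l₂ ≤ 2*l - 1 + |a| * l₁ := by exact_mod_cast hb
      have haA' : |a| ≤ A' := (Int.le_ediv_iff_mul_le hl1).mpr haz
      have hbB : |b| ≤ B := (Int.le_ediv_iff_mul_le hl2).mpr (by linarith)
      have hbB' : a = 0 → |b| ≤ B' := by
        intro ha0
        apply (Int.le_ediv_iff_mul_le hl2).mpr
        have : |a| = 0 := by simp [ha0]
        rw [this] at hbz; linarith
      have h1 := abs_le.mp haA'
      have h2 := abs_le.mp hbB
      by_cases ha0 : a = 0
      · have h3 := abs_le.mp (hbB' ha0)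
        right; right; exact ⟨ha0, h3.1, h3.2⟩
      · right; left; exact ⟨⟨⟨h1.1, h1.2⟩, ha0⟩, h2.1, h2.2⟩
  refine ⟨Set.Finite.subset (F1 ∪ F2).finite_toSet hsub, ?_⟩
  -- card computations
  have hz0B' : (0:ℤ) ∈ Finset.Icc (-B') B' := by simp [Finset.mem_Icc]; omega
  have hz0A' : (0:ℤ) ∈ Finset.Icc (-A') A' := by simp [Finset.mem_Icc]; omega
  have eA : ((Finset.Icc (-A) A).card : ℤ) = 2*A + 1 := by
    rw [Int.card_Icc]; omega
  have eA' : ((Finset.Icc (-A') A').card : ℤ) = 2*A' + 1 := by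
    rw [Int.card_Icc]; omega
  have eB : ((Finset.Icc (-B) B).card : ℤ) = 2*B + 1 := by
    rw [Int.card_Icc]; omega
  have eB' : ((Finset.Icc (-B') B').card : ℤ) = 2*B' + 1 := by
    rw [Int.card_Icc]; omega
  have eB'd : (((Finset.Icc (-B') B' \ {0}).card : ℤ)) = 2*B' := by
    rw [Finset.card_sdiff_of_subset (Finset.singleton_subset_iff.mpr hz0B'),
      Finset.card_singleton, Int.card_Icc]
    omega
  have eA'd : (((Finset.Icc (-A') A' \ {0}).card : ℤ)) = 2*A' := by
    rw [Finset.card_sdiff_of_subset (Finset.singleton_subset_iff.mpr hz0A'),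
      Finset.card_singleton, Int.card_Icc]
    omega
  have hd1 : Disjoint (Finset.Icc (-A) A ×ˢ (Finset.Icc (-B') B' \ {0}))
      (Finset.Icc (-A') A' ×ˢ ({0} : Finset ℤ)) := by
    rw [Finset.disjoint_left]
    rintro ⟨x, y⟩ hx hy
    simp only [Finset.mem_product, Finset.mem_sdiff, Finset.mem_singleton] at hx hy
    exact hx.2.2 hy.2
  have hd2 : Disjoint ((Finset.Icc (-A') A' \ {0}) ×ˢ Finset.Icc (-B) B)
      (({0} : Finset ℤ) ×ˢ Finset.Icc (-B') B') := by
    rw [Finset.disjoint_left]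
    rintro ⟨x, y⟩ hx hy
    simp only [Finset.mem_product, Finset.mem_sdiff, Finset.mem_singleton] at hx hy
    exact hx.1.2 hy.1
  have hcF1 : (F1.card : ℤ) = (2*A+1) * (2*B') + (2*A'+1) := by
    rw [hF1def, Finset.card_union_of_disjoint hd1, Finset.card_product, Finset.card_product,
      Finset.card_singleton]
    push_cast
    rw [eA, eA', eB'd]
    ring
  have hcF2 : (F2.card : ℤ) = (2*A') * (2*B+1) + (2*B'+1) := by
    rw [hF2def, Finset.card_union_of_disjoint hd2, Finset.card_product, Finset.card_product,
      Finset.card_singleton]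
    push_cast
    rw [eA'd, eB, eB']
    ring
  have hGsub : Finset.Icc (-A') A' ×ˢ Finset.Icc (-B') B' ⊆ F1 ∩ F2 := by
    rintro ⟨x, y⟩ hx
    simp only [Finset.mem_product, Finset.mem_Icc] at hx
    rw [Finset.mem_inter]
    constructor
    · simp only [hF1def, Finset.mem_union, Finset.mem_product, Finset.mem_Icc,
        Finset.mem_sdiff, Finset.mem_singleton]
      by_cases hy : y = 0
      · right; exact ⟨⟨hx.1.1, hx.1.2⟩, hy⟩
      · left; exact ⟨⟨by linarith [hx.1.1], by linarith [hx.1.2]⟩, ⟨hx.2.1, hx.2.2⟩, hy⟩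
    · simp only [hF2def, Finset.mem_union, Finset.mem_product, Finset.mem_Icc,
        Finset.mem_sdiff, Finset.mem_singleton]
      by_cases hx0 : x = 0
      · right; exact ⟨hx0, hx.2.1, hx.2.2⟩
      · left; exact ⟨⟨⟨hx.1.1, hx.1.2⟩, hx0⟩, by linarith [hx.2.1], by linarith [hx.2.2]⟩
  have hGcard : (2*A'+1) * (2*B'+1) ≤ ((F1 ∩ F2).card : ℤ) := by
    have h := Finset.card_le_card hGsub
    have h2 : ((Finset.Icc (-A') A' ×ˢ Finset.Icc (-B') B').card : ℤ)
        = (2*A'+1) * (2*B'+1) := by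
      rw [Finset.card_product]; push_cast; rw [eA', eB']
    rw [← h2]; exact_mod_cast h
  have hU : ((F1 ∪ F2).card : ℤ) ≤ (2*A+1)*(2*B') + (2*A'+1)
      + ((2*A')*(2*B+1) + (2*B'+1)) - (2*A'+1)*(2*B'+1) := by
    have hq := Finset.card_union_add_card_inter F1 F2
    have hq' : ((F1 ∪ F2).card : ℤ) + ((F1 ∩ F2).card : ℤ) = (F1.card : ℤ) + (F2.card : ℤ) := by
      exact_mod_cast congrArg (fun n : ℕ => (n : ℤ)) hq
    rw [hcF1, hcF2] at hq'
    linarith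
  have hkey := key_ineq l₁ l₂ l A A' B B' hl1 h12 h2l hA'1 hA'2 hA1 hA2 hB'1 hB'2 hB1 hB2
  have hncard : ({p : ℤ × ℤ | MemS l₁ l₂ l p.1 p.2}.ncard : ℤ) ≤ ((F1 ∪ F2).card : ℤ) := by
    have h := Set.ncard_le_ncard hsub (F1 ∪ F2).finite_toSet
    rw [Set.ncard_coe_finset] at h
    exact_mod_cast h
  rw [le_div_iff₀ (by positivity : (0:ℝ) < (l₁:ℝ) * (l₂:ℝ))]
  have hfin : ({p : ℤ × ℤ | MemS l₁ l₂ l p.1 p.2}.ncard : ℤ) * (l₁ * l₂) ≤ 64 * l^2 := by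
    calc ({p : ℤ × ℤ | MemS l₁ l₂ l p.1 p.2}.ncard : ℤ) * (l₁ * l₂)
        ≤ ((2*A+1)*(2*B') + (2*A'+1) + ((2*A')*(2*B+1) + (2*B'+1))
            - (2*A'+1)*(2*B'+1)) * (l₁ * l₂) := by
          apply mul_le_mul_of_nonneg_right (le_trans hncard hU) (by positivity)
      _ = l₁ * l₂ * ((2*A+1)*(2*B') + (2*A'+1) + ((2*A')*(2*B+1) + (2*B'+1))
            - (2*A'+1)*(2*B'+1)) := by ring
      _ ≤ 64 * l^2 := hkey
  exact_mod_cast hfin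
end
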